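/- arXiv:1504.04074 — 7 statements merged into one kernel-verified Lean document; each statement's English description precedes it below -/
import Mathlib

section
/- (Lemma 2) In the single-user setup, suppose Q[0] = 0 and, for every frame k, the action α_k is chosen as a maximizer over 𝒜 of (V B̄ φ(α) − Q[k] p(α)) / (1 + φ(α)/λ), and Q[k+1] = max{Q[k] + p(α_k) − β T[k], 0} where T[k] ≥ 1. Then for all k ≥ 0: Q[k] ≤ max{ V B̄ / p^min + p^max − β, 0 }. -/
open Finset

/-- Lemma 2: Deterministic bound on the virtual queue under the
single-user drift-plus-penalty ratio maximizing policy. -/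
theorem stmt2 {A : Type*} [Fintype A] [DecidableEq A] (zero : A)
    (p φ : A → ℝ)
    (hp : ∀ a, 0 ≤ p a) (hp0 : p zero = 0)
    (hφ : ∀ a, 0 ≤ φ a ∧ φ a ≤ 1) (hφ0 : φ zero = 0)
    (V B lam β : ℝ) (hV : 0 ≤ V) (hB : 0 < B) (hlam : 0 < lam) (hβ : 0 < β)
    (hne : (Finset.univ.filter (fun a : A => a ≠ zero)).Nonempty)
    (pmin pmax : ℝ)
    (hpmin : pmin = (Finset.univ.filter (fun a : A => a ≠ zero)).inf' hne p)
    (hpmax : pmax = (Finset.univ.filter (fun a : A => a ≠ zero)).sup' hne p)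
    (hpminpos : 0 < pmin)
    (T : ℕ → ℕ) (hT : ∀ k, 1 ≤ T k)
    (α : ℕ → A) (Q : ℕ → ℝ) (hQ0 : Q 0 = 0)
    (hopt : ∀ k (a : A), (V * B * φ a - Q k * p a) / (1 + φ a / lam) ≤
      (V * B * φ (α k) - Q k * p (α k)) / (1 + φ (α k) / lam))
    (hQrec : ∀ k, Q (k + 1) = max (Q k + p (α k) - β * (T k : ℝ)) 0) :
    ∀ k, Q k ≤ max (V * B / pmin + pmax - β) 0 := by
  have hQnn : ∀ k, 0 ≤ Q k := by
    intro k
    cases k with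
    | zero => rw [hQ0]
    | succ n => rw [hQrec n]; exact le_max_right _ _
  have hMnn : (0:ℝ) ≤ max (V * B / pmin + pmax - β) 0 := le_max_right _ _
  intro k
  induction k with
  | zero => rw [hQ0]; exact hMnn
  | succ n ih =>
    rw [hQrec n]
    apply max_le _ hMnn
    have hT1 : (1:ℝ) ≤ (T n : ℝ) := by exact_mod_cast hT n
    have hβT : β ≤ β * (T n : ℝ) := by nlinarith
    by_cases hle : Q n ≤ V * B / pmin
    · have hpmax' : p (α n) ≤ pmax := by
        by_cases hz : α n = zero
        · rw [hz, hp0, hpmax]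
          obtain ⟨a, ha⟩ := hne
          exact le_trans (hp a) (le_sup' p ha)
        · rw [hpmax]
          exact le_sup' p (by simp [hz])
      have h2 : Q n + p (α n) - β * (T n : ℝ) ≤ V * B / pmin + pmax - β := by
        linarith
      exact le_trans h2 (le_max_left _ _)
    · push_neg at hle
      have hαz : α n = zero := by
        by_contra hz
        have hmem : α n ∈ Finset.univ.filter (fun a : A => a ≠ zero) := by
          simp [hz]
        have hpge : pmin ≤ p (α n) := hpmin ▸ inf'_le p hmem
        have h0 := hopt n zero
        rw [hφ0, hp0] at h0
        simp at h0
        have hden : 0 < 1 + φ (α n) / lam := by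
          have := (hφ (α n)).1
          positivity
        have hnum : 0 ≤ V * B * φ (α n) - Q n * p (α n) := by
          by_contra hneg
          push_neg at hneg
          nlinarith [div_neg_of_neg_of_pos hneg hden]
        have h1 : V * B / pmin * pmin = V * B :=
          div_mul_cancel₀ _ (ne_of_gt hpminpos)
        nlinarith [(hφ (α n)).2, hQnn n, mul_nonneg hV hB.le]
      rw [hαz, hp0]
      have h3 : Q n + 0 - β * (T n : ℝ) ≤ Q n := by linarith
      exact le_trans h3 ih
end

section
/- (Theorem 1, power-constraint part; sample-path result) In the single-user setup, suppose Q[0] = 0, each frame-start action α_k is a maximizer over 𝒜 of (V B̄ φ(α) − Q[k] p(α)) / (1 + φ(α)/λ), the queue is updated by Q[k+1] = max{Q[k] + p(α_k) − β T[k], 0} with integer frame lengths T[k] ≥ 1 with frame-start slots t_0 = 0 and t_{k+1} = t_k + T[k], and the slot power sequence satisfies p(t_k) = p(α_k) and p(t) = 0 at all non-frame-start slots. Then limsup_{T→∞} (1/T) Σ_{t=0}^{T−1} p(t) ≤ β, regardless of the actual values of the frame lengths T[k]. -/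
open Filter Finset

/-- Theorem 1, power-constraint part: Under the single-user
drift-plus-penalty ratio maximizing policy, the sample-path time average power
never exceeds `β`, regardless of the actual values of the frame lengths. -/
theorem stmt3 {A : Type*} [Fintype A] [DecidableEq A] (zero : A)
    (p φ : A → ℝ)
    (hp : ∀ a, 0 ≤ p a) (hp0 : p zero = 0)
    (hφ : ∀ a, 0 ≤ φ a ∧ φ a ≤ 1) (hφ0 : φ zero = 0)
    (V B lam β : ℝ) (hV : 0 ≤ V) (hB : 0 < B) (hlam : 0 < lam) (hβ : 0 < β)
    (hne : (Finset.univ.filter (fun a : A => a ≠ zero)).Nonempty)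
    (pmin : ℝ)
    (hpmin : pmin = (Finset.univ.filter (fun a : A => a ≠ zero)).inf' hne p)
    (hpminpos : 0 < pmin)
    (T : ℕ → ℕ) (hT : ∀ k, 1 ≤ T k)
    (t : ℕ → ℕ) (ht0 : t 0 = 0) (htrec : ∀ k, t (k + 1) = t k + T k)
    (α : ℕ → A) (Q : ℕ → ℝ) (hQ0 : Q 0 = 0)
    (hopt : ∀ k (a : A), (V * B * φ a - Q k * p a) / (1 + φ a / lam) ≤
      (V * B * φ (α k) - Q k * p (α k)) / (1 + φ (α k) / lam))
    (hQrec : ∀ k, Q (k + 1) = max (Q k + p (α k) - β * (T k : ℝ)) 0)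
    (pslot : ℕ → ℝ)
    (hps1 : ∀ k, pslot (t k) = p (α k))
    (hps0 : ∀ s : ℕ, (∀ k, s ≠ t k) → pslot s = 0) :
    limsup (fun T' : ℕ => (1 / (T' : ℝ)) * ∑ s ∈ Finset.range T', pslot s) atTop ≤ β := by
  -- pmax: maximum power
  have hAne : (Finset.univ : Finset A).Nonempty := ⟨zero, mem_univ zero⟩
  set pmax := Finset.univ.sup' hAne p with hpmaxdef
  have hpmax_le : ∀ a, p a ≤ pmax := fun a => Finset.le_sup' p (mem_univ a)
  have hpmax0 : 0 ≤ pmax := hp0 ▸ hpmax_le zero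
  have hVB : 0 ≤ V * B := mul_nonneg hV hB.le
  have hdiv : 0 ≤ V * B / pmin := div_nonneg hVB hpminpos.le
  -- strict monotonicity of frame starts
  have hstrict : StrictMono t := strictMono_nat_of_lt_succ (fun k => by
    have := hT k; rw [htrec]; omega)
  have htk : ∀ k, k ≤ t k := fun k => hstrict.le_apply
  -- queue nonneg
  have hQnn : ∀ k, 0 ≤ Q k := by
    intro k; cases k with
    | zero => rw [hQ0]
    | succ k => rw [hQrec k]; exact le_max_right _ _
  -- key inequality: Q k * p (α k) ≤ V * B
  have hkey : ∀ k, Q k * p (α k) ≤ V * B := by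
    intro k
    have h := hopt k zero
    rw [hφ0, hp0] at h
    simp only [mul_zero, zero_div, sub_zero, zero_add] at h
    have hden : (0:ℝ) < 1 + φ (α k) / lam :=
      lt_of_lt_of_le one_pos (by
        have := (hφ (α k)).1
        have : 0 ≤ φ (α k) / lam := div_nonneg this hlam.le
        linarith)
    have hnum : 0 ≤ V * B * φ (α k) - Q k * p (α k) := by
      have := (div_nonneg_iff).mp (le_trans (by simp) h)
      rcases this with ⟨h1, _⟩ | ⟨_, h2⟩
      · exact h1
      · linarith
    have hφle : V * B * φ (α k) ≤ V * B := by
      have := (hφ (α k)).2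
      nlinarith
    linarith
  -- queue bound
  have hQbd : ∀ k, Q k ≤ V * B / pmin + pmax := by
    intro k
    induction k with
    | zero => rw [hQ0]; linarith
    | succ k ih =>
      rw [hQrec k]
      have hβT : 0 ≤ β * (T k : ℝ) := mul_nonneg hβ.le (Nat.cast_nonneg _)
      by_cases hc : Q k ≤ V * B / pmin
      · refine max_le (by have := hpmax_le (α k); linarith) (by linarith)
      · push_neg at hc
        have hQpos : 0 < Q k := lt_of_le_of_lt hdiv hc
        have hpz : p (α k) = 0 := by
          by_contra h
          have hαz : α k ≠ zero := fun h' => h (h' ▸ hp0)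
          have hge : pmin ≤ p (α k) := by
            rw [hpmin]
            exact Finset.inf'_le (b := α k) p (by simp [hαz])
          have h1 := hkey k
          have h2 : V * B < Q k * pmin := (div_lt_iff₀ hpminpos).mp hc
          nlinarith
        rw [hpz]
        exact max_le (by linarith) (by linarith)
  -- telescoping: partial sums of p (α k)
  have hsum1 : ∀ K, ∑ k ∈ range K, p (α k) ≤ Q K + β * (t K : ℝ) := by
    intro K
    induction K with
    | zero => simp [hQ0, ht0]
    | succ K ih =>
      rw [sum_range_succ]
      have h1 : Q K + p (α K) - β * (T K : ℝ) ≤ Q (K + 1) := by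
        rw [hQrec K]; exact le_max_left _ _
      have h2 : (t (K+1) : ℝ) = (t K : ℝ) + (T K : ℝ) := by
        rw [htrec K]; push_cast; ring
      rw [h2]; linarith
  -- slot power nonneg
  have hpsnn : ∀ s, 0 ≤ pslot s := by
    intro s
    by_cases h : ∃ k, s = t k
    · obtain ⟨k, rfl⟩ := h; rw [hps1]; exact hp _
    · push_neg at h; rw [hps0 s h]
  -- frame sum identity
  have hframe : ∀ K, ∑ s ∈ range (t K), pslot s = ∑ k ∈ range K, p (α k) := by
    intro K
    induction K with
    | zero => simp [ht0]
    | succ K ih =>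
      have hle : t K ≤ t (K + 1) := (hstrict.monotone (Nat.le_succ K))
      rw [← Nat.Ico_zero_eq_range, ← Finset.sum_Ico_consecutive _ (Nat.zero_le (t K)) hle,
        Nat.Ico_zero_eq_range, ih, sum_range_succ]
      congr 1
      have hmem : t K ∈ Finset.Ico (t K) (t (K+1)) := by
        rw [Finset.mem_Ico]
        exact ⟨le_refl _, hstrict (Nat.lt_succ_self K)⟩
      rw [Finset.sum_eq_single_of_mem (t K) hmem, hps1]
      intro s hs hne'
      rw [Finset.mem_Ico] at hs
      apply hps0
      intro j hj
      rcases le_or_gt j K with hjK | hjK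
      · have : t j ≤ t K := hstrict.monotone hjK
        rcases eq_or_lt_of_le this with heq | hlt
        · exact hne' (hj ▸ heq ▸ rfl)
        · omega
      · have : t (K+1) ≤ t j := hstrict.monotone hjK
        omega
  -- per-horizon bound
  set C := V * B / pmin + 2 * pmax with hCdef
  have hC0 : 0 ≤ C := by rw [hCdef]; linarith
  have hbound : ∀ T' : ℕ, 1 ≤ T' →
      ∑ s ∈ range T', pslot s ≤ C + β * (T' : ℝ) := by
    intro T' hT'
    have hex : ∃ K, T' ≤ t K := ⟨T', htk T'⟩
    set K := Nat.find hex with hKdef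
    have hK : T' ≤ t K := Nat.find_spec hex
    have hKpos : K ≠ 0 := by
      intro h; rw [h, ht0] at hK; omega
    obtain ⟨J, hJ⟩ : ∃ J, K = J + 1 := ⟨K - 1, (Nat.succ_pred_eq_of_ne_zero hKpos).symm⟩
    have hJlt : t J < T' := by
      have := Nat.find_min hex (by omega : J < K)
      omega
    have htJle : (t J : ℝ) ≤ (T' : ℝ) := by exact_mod_cast hJlt.le
    calc ∑ s ∈ range T', pslot s
        ≤ ∑ s ∈ range (t K), pslot s :=
          Finset.sum_le_sum_of_subset_of_nonneg (Finset.range_subset_range.2 hK)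
            (fun i _ _ => hpsnn i)
      _ = ∑ k ∈ range K, p (α k) := hframe K
      _ = ∑ k ∈ range J, p (α k) + p (α J) := by rw [hJ, sum_range_succ]
      _ ≤ (Q J + β * (t J : ℝ)) + pmax := add_le_add (hsum1 J) (hpmax_le _)
      _ ≤ C + β * (T' : ℝ) := by
          have h1 := hQbd J
          have h2 : β * (t J : ℝ) ≤ β * (T' : ℝ) := by
            exact mul_le_mul_of_nonneg_left htJle hβ.le
          rw [hCdef]; linarith
  -- conclude via limsup comparison
  have hev : ∀ᶠ T' : ℕ in atTop, (1 / (T' : ℝ)) * ∑ s ∈ range T', pslot s ≤ β + C / (T' : ℝ) := by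
    filter_upwards [eventually_ge_atTop (1:ℕ)] with T' hT'
    have hTpos : (0:ℝ) < (T' : ℝ) := by exact_mod_cast hT'
    have := hbound T' hT'
    rw [one_div, inv_mul_le_iff₀ hTpos]
    calc ∑ s ∈ range T', pslot s ≤ C + β * (T' : ℝ) := hbound T' hT'
      _ = (T' : ℝ) * (β + C / (T' : ℝ)) := by field_simp; ring
  have hg : Tendsto (fun T' : ℕ => β + C / (T' : ℝ)) atTop (nhds β) := by
    have h0 : Tendsto (fun T' : ℕ => C / (T' : ℝ)) atTop (nhds 0) :=
      tendsto_const_div_atTop_nhds_zero_nat C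
    simpa using tendsto_const_nhds.add h0
  have hcob : IsCoboundedUnder (· ≤ ·) atTop
      (fun T' : ℕ => (1 / (T' : ℝ)) * ∑ s ∈ range T', pslot s) := by
    apply Filter.IsBoundedUnder.isCoboundedUnder_le
    apply Filter.isBoundedUnder_of
    refine ⟨0, fun T' => ?_⟩
    have h1 : (0:ℝ) ≤ 1 / (T' : ℝ) := by positivity
    exact mul_nonneg h1 (Finset.sum_nonneg fun i _ => hpsnn i)
  have hbdd : IsBoundedUnder (· ≤ ·) atTop (fun T' : ℕ => β + C / (T' : ℝ)) :=
    hg.isBoundedUnder_le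
  calc limsup (fun T' : ℕ => (1 / (T' : ℝ)) * ∑ s ∈ range T', pslot s) atTop
      ≤ limsup (fun T' : ℕ => β + C / (T' : ℝ)) atTop :=
        limsup_le_limsup hev hcob hbdd
    _ = β := hg.limsup_eq
end

section
/- (Key-feature inequality) In the single-user setup, suppose θ : 𝒜 → ℝ is a probability mass function such that B̄·(Σ_α θ(α)φ(α)) / (1 + (Σ_α θ(α)φ(α))/λ) = μ* and (Σ_α θ(α)p(α)) / (1 + (Σ_α θ(α)φ(α))/λ) ≤ β. Then for every Q ≥ 0, any maximizer α̂ over 𝒜 of (V B̄ φ(α) − Q p(α)) / (1 + φ(α)/λ) satisfies (−V B̄ φ(α̂) + Q p(α̂)) / (1 + φ(α̂)/λ) ≤ −V μ* + Q β. -/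
open Finset

/-- Key-feature inequality: If an i.i.d. randomized policy `θ` achieves
throughput `μ*` while satisfying the power budget, then any maximizer of the
drift-plus-penalty ratio satisfies the key-feature inequality. -/
theorem stmt5 {A : Type*} [Fintype A] (zero : A)
    (p φ : A → ℝ)
    (hp : ∀ a, 0 ≤ p a) (hp0 : p zero = 0)
    (hφ : ∀ a, 0 ≤ φ a ∧ φ a ≤ 1) (hφ0 : φ zero = 0)
    (V B lam β μstar Q : ℝ)
    (hV : 0 ≤ V) (hB : 0 < B) (hlam : 0 < lam) (hβ : 0 < β) (hQ : 0 ≤ Q)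
    (θ : A → ℝ) (hθ : ∀ a, 0 ≤ θ a) (hθsum : ∑ a, θ a = 1)
    (hthru : B * (∑ a, θ a * φ a) / (1 + (∑ a, θ a * φ a) / lam) = μstar)
    (hpow : (∑ a, θ a * p a) / (1 + (∑ a, θ a * φ a) / lam) ≤ β)
    (ahat : A)
    (hmax : ∀ a : A, (V * B * φ a - Q * p a) / (1 + φ a / lam) ≤
      (V * B * φ ahat - Q * p ahat) / (1 + φ ahat / lam)) :
    (-(V * B * φ ahat) + Q * p ahat) / (1 + φ ahat / lam) ≤ -(V * μstar) + Q * β := by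
  set S := ∑ a, θ a * φ a with hS
  set P := ∑ a, θ a * p a with hP
  set f := (V * B * φ ahat - Q * p ahat) / (1 + φ ahat / lam) with hf
  have hS0 : 0 ≤ S := Finset.sum_nonneg fun a _ => mul_nonneg (hθ a) (hφ a).1
  have hD : 0 < 1 + S / lam := by positivity
  have hda : ∀ a : A, 0 < 1 + φ a / lam := by
    intro a; have := (hφ a).1; positivity
  have key : ∀ a : A, θ a * (V * B * φ a - Q * p a) ≤ θ a * (1 + φ a / lam) * f := by
    intro a
    calc θ a * (V * B * φ a - Q * p a)
        = θ a * ((1 + φ a / lam) * ((V * B * φ a - Q * p a) / (1 + φ a / lam))) := by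
          rw [mul_div_cancel₀ _ (hda a).ne']
      _ ≤ θ a * ((1 + φ a / lam) * f) := by
          exact mul_le_mul_of_nonneg_left
            (mul_le_mul_of_nonneg_left (hmax a) (hda a).le) (hθ a)
      _ = θ a * (1 + φ a / lam) * f := by ring
  have hLHS : ∑ a, θ a * (V * B * φ a - Q * p a) = V * B * S - Q * P := by
    rw [hS, hP, Finset.mul_sum, Finset.mul_sum, ← Finset.sum_sub_distrib]
    exact Finset.sum_congr rfl fun a _ => by ring
  have hDsum : ∑ a, θ a * (1 + φ a / lam) = 1 + S / lam := by
    have : ∀ a : A, θ a * (1 + φ a / lam) = θ a + θ a * φ a / lam := fun a => by ring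
    rw [Finset.sum_congr rfl fun a _ => this a, Finset.sum_add_distrib, hθsum,
      ← Finset.sum_div]
  have h1 : V * B * S - Q * P ≤ (1 + S / lam) * f := by
    calc V * B * S - Q * P = ∑ a, θ a * (V * B * φ a - Q * p a) := hLHS.symm
      _ ≤ ∑ a, θ a * (1 + φ a / lam) * f := Finset.sum_le_sum fun a _ => key a
      _ = (∑ a, θ a * (1 + φ a / lam)) * f := by rw [← Finset.sum_mul]
      _ = (1 + S / lam) * f := by rw [hDsum]
  have h2 : (V * B * S - Q * P) / (1 + S / lam) ≤ f := by
    rw [div_le_iff₀ hD]; linarith [h1]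
  have h3 : V * μstar = V * (B * S / (1 + S / lam)) := by rw [hthru]
  have h4 : Q * (P / (1 + S / lam)) ≤ Q * β := mul_le_mul_of_nonneg_left hpow hQ
  have h5 : V * (B * S / (1 + S / lam)) - Q * (P / (1 + S / lam))
      = (V * B * S - Q * P) / (1 + S / lam) := by
    field_simp
  have hgoal : V * μstar - Q * β ≤ f := by
    rw [h3]; linarith [h2, h4, h5.le, h5.ge]
  have heq : (-(V * B * φ ahat) + Q * p ahat) / (1 + φ ahat / lam) = -f := by
    rw [hf, ← neg_div]; ring_nf
  rw [heq]; linarith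
end

section
/- (Coupled-arrival induction step) Let F̃^π, F̃^λ ∈ {0,1}^N satisfy Σ_{n=1}^j F̃^π_n ≤ Σ_{n=1}^j F̃^λ_n for all j ∈ {1,…,N}. Let K be the number of zero entries of F̃^λ, and let j^π(l) and j^λ(l) denote the positions of the l-th zero entry (in increasing order) of F̃^π and F̃^λ respectively (so j^π(l) ≤ j^λ(l) for l ≤ K). Let A, A^λ ∈ {0,1}^N be arrival vectors satisfying A_{j^π(l)} ≤ A^λ_{j^λ(l)} for all l ∈ {1,…,K}. Define the post-arrival states F'^π_n = F̃^π_n + (1 − F̃^π_n) A_n and F'^λ_n = F̃^λ_n + (1 − F̃^λ_n) A^λ_n. Then Σ_{n=1}^j F'^π_n ≤ Σ_{n=1}^j F'^λ_n for all j ∈ {1,…,N}. -/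
open Finset

/-- Sorted list: filtering by `· ≤ j` equals takeWhile. -/
lemma my_sorted_filter_eq_takeWhile (j : ℕ) :
    ∀ (l : List ℕ), l.Pairwise (· ≤ ·) →
      l.filter (fun n => decide (n ≤ j)) = l.takeWhile (fun n => decide (n ≤ j)) := by
  intro l
  induction l with
  | nil => intro _; rfl
  | cons a t ih =>
    intro h
    by_cases ha : a ≤ j
    · simp [List.filter_cons, List.takeWhile_cons, ha, ih h.of_cons]
    · have ht : ∀ x ∈ t, ¬ x ≤ j := fun x hx hxj =>
        ha (le_trans (List.rel_of_pairwise_cons h hx) hxj)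
      rw [List.takeWhile_cons_of_neg (by simpa using ha),
        List.filter_cons_of_neg (by simpa using ha),
        List.filter_eq_nil_iff.mpr (by intro x hx; simpa using ht x hx)]

/-- Sum of a mapped list as a sum over `range`. -/
lemma my_sum_map_eq_sum_range (f : ℕ → ℕ) :
    ∀ (l : List ℕ), (l.map f).sum = ∑ i ∈ Finset.range l.length, f (l.getD i 0) := by
  intro l
  induction l with
  | nil => simp
  | cons a t ih =>
    simp only [List.map_cons, List.sum_cons, List.length_cons]
    rw [Finset.sum_range_succ']
    simp only [List.getD_cons_succ, List.getD_cons_zero]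
    rw [ih]; ring

/-- Sum over a finset equals sum over its sorted list. -/
lemma my_sum_sort (s : Finset ℕ) (f : ℕ → ℕ) :
    ∑ n ∈ s, f n = ((s.sort (· ≤ ·)).map f).sum := by
  rw [← Finset.sum_map_toList]
  exact (List.Perm.sum_eq (List.Perm.map f (Finset.sort_perm_toList s _))).symm

/-- Sort of a filtered finset equals filter of the sort. -/
lemma my_sort_filter (s : Finset ℕ) (p : ℕ → Prop) [DecidablePred p] :
    (s.filter p).sort (· ≤ ·) = (s.sort (· ≤ ·)).filter (fun n => decide (p n)) := by
  refine (fun h1 h2 h3 => List.Perm.eq_of_pairwise' (r := (· ≤ ·)) h2 h3 h1) ?_ ?_ ?_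
  · rw [← Multiset.coe_eq_coe]
    rw [Finset.sort_eq, Finset.filter_val, ← Finset.sort_eq s (· ≤ ·), Multiset.filter_coe]
  · exact Finset.pairwise_sort _ _
  · exact (Finset.pairwise_sort s _).filter _

/-- Splitting the post-arrival sum. -/
lemma my_split (s : Finset ℕ) (f a : ℕ → ℕ) (hf : ∀ n ∈ s, f n ≤ 1) :
    ∑ n ∈ s, (f n + (1 - f n) * a n)
      = (∑ n ∈ s, f n) + ∑ n ∈ s.filter (fun n => f n = 0), a n := by
  rw [Finset.sum_add_distrib]
  congr 1
  rw [Finset.sum_filter]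
  apply Finset.sum_congr rfl
  intro n hn
  have := hf n hn
  interval_cases h : f n <;> simp

/-- Counting zeros. -/
lemma my_count (s : Finset ℕ) (f : ℕ → ℕ) (hf : ∀ n ∈ s, f n ≤ 1) :
    (∑ n ∈ s, f n) + (s.filter (fun n => f n = 0)).card = s.card := by
  classical
  rw [Finset.card_filter]
  rw [← Finset.sum_add_distrib]
  rw [Finset.card_eq_sum_ones]
  apply Finset.sum_congr rfl
  intro n hn
  have := hf n hn
  interval_cases h : f n <;> simp

/-- Main prefix-analysis lemma for one system. -/
lemma my_prefix (N j : ℕ) (hj1 : 1 ≤ j) (hjN : j ≤ N) (F A : ℕ → ℕ)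
    (hF : ∀ n ∈ Finset.Icc 1 N, F n ≤ 1) :
    let E := (Finset.Icc 1 N).filter (fun n => F n = 0)
    let s := E.sort (· ≤ ·)
    let p := ((Finset.Icc 1 j).filter (fun n => F n = 0)).card
    (∑ n ∈ Finset.Icc 1 j, (F n + (1 - F n) * A n)
        = (∑ n ∈ Finset.Icc 1 j, F n) + ∑ i ∈ Finset.range p, A (s.getD i 0)) ∧
      (∑ n ∈ Finset.Icc 1 j, F n) + p = j ∧ p ≤ s.length := by
  intro E s p
  have hsub : Finset.Icc 1 j ⊆ Finset.Icc 1 N := Finset.Icc_subset_Icc_right hjN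
  have hF' : ∀ n ∈ Finset.Icc 1 j, F n ≤ 1 := fun n hn => hF n (hsub hn)
  -- the filtered finset over Icc 1 j equals E filtered by ≤ j
  have hEq : (Finset.Icc 1 j).filter (fun n => F n = 0)
      = E.filter (fun n => n ≤ j) := by
    ext n
    simp only [E, Finset.mem_filter, Finset.mem_Icc]
    constructor
    · rintro ⟨⟨h1, h2⟩, h3⟩; exact ⟨⟨⟨h1, le_trans h2 hjN⟩, h3⟩, h2⟩
    · rintro ⟨⟨⟨h1, _⟩, h3⟩, h2⟩; exact ⟨⟨h1, h2⟩, h3⟩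
  have hsortEq : (E.filter (fun n => n ≤ j)).sort (· ≤ ·)
      = s.takeWhile (fun n => decide (n ≤ j)) := by
    rw [my_sort_filter]
    exact my_sorted_filter_eq_takeWhile j s (Finset.pairwise_sort E _)
  set t : List ℕ := s.takeWhile (fun n => decide (n ≤ j)) with ht
  have hpre : t <+: s := List.takeWhile_prefix _
  have hlen : t.length = p := by
    rw [← hsortEq, Finset.length_sort, ← hEq]
  have hplen : p ≤ s.length := hlen ▸ hpre.length_le
  have hget : ∀ i ∈ Finset.range p, A (t.getD i 0) = A (s.getD i 0) := by
    intro i hi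
    have hi' : i < t.length := hlen ▸ Finset.mem_range.mp hi
    congr 1
    rw [List.getD_eq_getElem _ _ hi', List.getD_eq_getElem _ _ (lt_of_lt_of_le hi' hpre.length_le)]
    exact List.IsPrefix.getElem hpre hi'
  have key : ∑ n ∈ E.filter (fun n => n ≤ j), A n = ∑ i ∈ Finset.range p, A (s.getD i 0) := by
    rw [my_sum_sort (E.filter (fun n => n ≤ j)) A, hsortEq, my_sum_map_eq_sum_range, hlen]
    exact Finset.sum_congr rfl hget
  refine ⟨?_, ?_, hplen⟩
  · rw [my_split _ _ _ hF', hEq, key]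
  · have := my_count (Finset.Icc 1 j) F hF'
    rwa [Nat.card_Icc, Nat.add_sub_cancel] at this

/-- Coupled-arrival induction step: If post-service buffer states
`Fpi` (policy π) are prefix-dominated by `Fml` (Max-λ), and the arrival vectors `Api`
and `Aml` are coupled so that an arrival to the `l`-th empty buffer of the π system
implies an arrival to the `l`-th empty buffer of the Max-λ system (for `l` up to the
number `K` of empty buffers of the Max-λ system), then the post-arrival states
(arrivals accepted only into empty buffers) still satisfy prefix domination. -/
theorem stmt12 (N : ℕ) (Fpi Fml Api Aml : ℕ → ℕ)
    (hFpibin : ∀ n ∈ Finset.Icc 1 N, Fpi n ≤ 1)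
    (hFmlbin : ∀ n ∈ Finset.Icc 1 N, Fml n ≤ 1)
    (hApibin : ∀ n ∈ Finset.Icc 1 N, Api n ≤ 1)
    (hAmlbin : ∀ n ∈ Finset.Icc 1 N, Aml n ≤ 1)
    (hdom : ∀ j ∈ Finset.Icc 1 N,
      ∑ n ∈ Finset.Icc 1 j, Fpi n ≤ ∑ n ∈ Finset.Icc 1 j, Fml n)
    (hcouple : ∀ l < ((Finset.Icc 1 N).filter (fun n => Fml n = 0)).card,
      Api ((((Finset.Icc 1 N).filter (fun n => Fpi n = 0)).sort (· ≤ ·)).getD l 0) ≤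
      Aml ((((Finset.Icc 1 N).filter (fun n => Fml n = 0)).sort (· ≤ ·)).getD l 0)) :
    ∀ j ∈ Finset.Icc 1 N,
      ∑ n ∈ Finset.Icc 1 j, (Fpi n + (1 - Fpi n) * Api n) ≤
      ∑ n ∈ Finset.Icc 1 j, (Fml n + (1 - Fml n) * Aml n) := by
  intro j hj
  obtain ⟨hj1, hjN⟩ := Finset.mem_Icc.mp hj
  obtain ⟨hLpi, hppi, hplenpi⟩ := my_prefix N j hj1 hjN Fpi Api hFpibin
  obtain ⟨hLml, hpml, hplenml⟩ := my_prefix N j hj1 hjN Fml Aml hFmlbin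
  set Epi := (Finset.Icc 1 N).filter (fun n => Fpi n = 0) with hEpi
  set Eml := (Finset.Icc 1 N).filter (fun n => Fml n = 0) with hEml
  set spi := Epi.sort (· ≤ ·)
  set sml := Eml.sort (· ≤ ·)
  set p := ((Finset.Icc 1 j).filter (fun n => Fpi n = 0)).card with hp
  set q := ((Finset.Icc 1 j).filter (fun n => Fml n = 0)).card with hq
  set Spi := ∑ n ∈ Finset.Icc 1 j, Fpi n
  set Sml := ∑ n ∈ Finset.Icc 1 j, Fml n
  rw [hLpi, hLml]
  have hSdom : Spi ≤ Sml := hdom j hj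
  have hqp : q ≤ p := by omega
  -- q ≤ K
  have hqK : q ≤ Eml.card := by
    rw [hq, hEml]
    apply Finset.card_le_card
    intro n hn
    simp only [Finset.mem_filter, Finset.mem_Icc] at hn ⊢
    exact ⟨⟨hn.1.1, le_trans hn.1.2 hjN⟩, hn.2⟩
  -- membership of getD values
  have hmempi : ∀ i < p, spi.getD i 0 ∈ Finset.Icc 1 N := by
    intro i hi
    have hi' : i < spi.length := lt_of_lt_of_le hi hplenpi
    have : spi.getD i 0 ∈ spi := by
      rw [List.getD_eq_getElem _ _ hi']; exact List.getElem_mem hi'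
    have := Finset.mem_sort (α := ℕ) (· ≤ ·) |>.mp this
    exact Finset.mem_of_mem_filter _ this
  -- split the π arrival sum
  have hsplit := Finset.sum_range_add (fun i => Api (spi.getD i 0)) q (p - q)
  have hpq : q + (p - q) = p := by omega
  rw [hpq] at hsplit
  have h1 : ∑ i ∈ Finset.range q, Api (spi.getD i 0)
      ≤ ∑ i ∈ Finset.range q, Aml (sml.getD i 0) := by
    apply Finset.sum_le_sum
    intro i hi
    exact hcouple i (lt_of_lt_of_le (Finset.mem_range.mp hi) hqK)
  have h2 : ∑ i ∈ Finset.range (p - q), Api (spi.getD (q + i) 0) ≤ p - q := by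
    calc ∑ i ∈ Finset.range (p - q), Api (spi.getD (q + i) 0)
        ≤ ∑ _i ∈ Finset.range (p - q), 1 := by
          apply Finset.sum_le_sum
          intro i hi
          exact hApibin _ (hmempi (q + i) (by have := Finset.mem_range.mp hi; omega))
      _ = p - q := by simp
  calc Spi + ∑ i ∈ Finset.range p, Api (spi.getD i 0)
      ≤ Spi + ((∑ i ∈ Finset.range q, Aml (sml.getD i 0)) + (p - q)) := by
        rw [hsplit]; omega
    _ = Sml + ∑ i ∈ Finset.range q, Aml (sml.getD i 0) := by omega
end

section
/- (Lemma, stochastic ordering of total packet processes) Consider N single-buffer queues with M servers (M < N), indexed so that λ_1 ≤ … ≤ λ_N with 0 < λ_n < 1, a fixed initial buffer state F(0) ∈ {0,1}^N, and arrivals A_n(t) that are independent Bernoulli(λ_n) across queues and i.i.d. over slots. Let π be any work-conserving policy: at each slot t it selects, as a function of the history F(0),…,F(t) and without knowledge of A(t), a service vector s(t) ∈ {0,1}^N with s_n(t) ≤ F_n(t) and Σ_n s_n(t) = min(M, Σ_n F_n(t)); buffers evolve as F_n(t+1) = (F_n(t) − s_n(t)) + (1 − F_n(t) + s_n(t)) A_n(t).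 Let Max-λ be the policy serving the min(M, Σ_n F_n(t)) nonempty queues with the largest indices. With U^π(t) = Σ_n F^π_n(t) and U^{Max-λ}(t) = Σ_n F^{Max-λ}_n(t) (both started from the same F(0)), the process U^π is stochastically less than or equal to U^{Max-λ}: for every t ≥ 0, every z ∈ ℝ, and every function g : ℝ^{t+1} → ℝ that is measurable and nondecreasing in each coordinate, P[g(U^π(0),…,U^π(t)) > z] ≤ P[g(U^{Max-λ}(0),…,U^{Max-λ}(t)) > z]. -/
open MeasureTheory ProbabilityTheory Finset

/-- Buffer dynamics of the `N` single-buffer queue system: a packet in buffer `n`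
remains if present and not served, and an end-of-slot arrival is accepted iff the
buffer is empty after service: `F_n(t+1) = (F_n(t) − s_n(t)) + (1 − F_n(t) + s_n(t))A_n(t)`. -/
def nextState {N : ℕ} (F s a : Fin N → Bool) : Fin N → Bool :=
  fun n => (F n && !(s n)) || a n

/-- The history of buffer states `[F(t), F(t-1), …, F(0)]` (most recent first) produced
by a policy `pol` (a function of the history of buffer states, without knowledge of the
current slot's arrivals) and arrival sequence `a`, from initial state `F0`. -/
def histories {N : ℕ} (F0 : Fin N → Bool)
    (pol : List (Fin N → Bool) → (Fin N → Bool))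
    (a : ℕ → Fin N → Bool) : ℕ → List (Fin N → Bool)
  | 0 => [F0]
  | t + 1 =>
      nextState (histories F0 pol a t).headI (pol (histories F0 pol a t)) (a t)
        :: histories F0 pol a t

/-- The buffer state `F(t)`. -/
def stateAt {N : ℕ} (F0 : Fin N → Bool)
    (pol : List (Fin N → Bool) → (Fin N → Bool))
    (a : ℕ → Fin N → Bool) (t : ℕ) : Fin N → Bool :=
  (histories F0 pol a t).headI

/-- Total number of packets present in buffer state `F`. -/
def packetCount {N : ℕ} (F : Fin N → Bool) : ℕ :=
  ∑ n, if F n then 1 else 0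

/-- A policy is feasible and work-conserving with `M` servers: it serves only nonempty
buffers (of the most recent state in the history) and serves exactly
`min(M, number of nonempty buffers)` of them. -/
def WorkConserving {N : ℕ} (M : ℕ)
    (pol : List (Fin N → Bool) → (Fin N → Bool)) : Prop :=
  ∀ h : List (Fin N → Bool),
    (∀ n, pol h n = true → h.headI n = true) ∧
    packetCount (pol h) = min M (packetCount h.headI)

/-- The Max-λ policy: serve the `min(M, number of nonempty buffers)` nonempty queues
with the largest indices (queues are indexed with `λ_1 ≤ … ≤ λ_N`). -/
def maxLambdaPol {N : ℕ} (M : ℕ) : List (Fin N → Bool) → (Fin N → Bool) :=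
  fun h n => h.headI n &&
    decide ((Finset.univ.filter (fun m : Fin N => n < m ∧ h.headI m = true)).card < M)

namespace Stmt14

variable {N : ℕ}

/-- cumulative count of packets at indices `< k`. -/
def cum (F : Fin N → Bool) (k : ℕ) : ℕ :=
  ∑ n : Fin N, if (n : ℕ) < k ∧ F n = true then 1 else 0

lemma cum_zero (F : Fin N → Bool) : cum F 0 = 0 := by
  simp [cum]

lemma cum_of_ge (F : Fin N → Bool) {k : ℕ} (hk : N ≤ k) : cum F k = packetCount F := by
  unfold cum packetCount
  refine Finset.sum_congr rfl fun n _ => ?_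
  have : (n : ℕ) < k := lt_of_lt_of_le n.isLt hk
  by_cases h : F n = true <;> simp [h, this]

lemma cum_succ (F : Fin N → Bool) (k : ℕ) :
    cum F (k + 1) = cum F k + (if h : k < N then (if F ⟨k, h⟩ = true then 1 else 0) else 0) := by
  unfold cum
  have step : ∀ n : Fin N, (if (n : ℕ) < k + 1 ∧ F n = true then 1 else 0) =
      (if (n : ℕ) < k ∧ F n = true then 1 else 0) + (if (n : ℕ) = k ∧ F n = true then 1 else 0) := by
    intro n
    by_cases hF : F n = true
    · by_cases h1 : (n : ℕ) < k
      · have h2 : (n:ℕ) ≠ k := Nat.ne_of_lt h1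
        simp [hF, h1, h2, Nat.lt_succ_of_lt h1]
      · by_cases h2 : (n:ℕ) = k
        · simp [hF, h1, h2]
        · have h3 : ¬ (n:ℕ) < k + 1 := by omega
          simp [hF, h1, h2, h3]
    · simp [hF]
  rw [Finset.sum_congr rfl (fun n _ => step n), Finset.sum_add_distrib]
  congr 1
  by_cases h : k < N
  · simp only [dif_pos h]
    have : ∀ n : Fin N, (if (n : ℕ) = k ∧ F n = true then 1 else 0) =
        (if n = ⟨k, h⟩ then (if F ⟨k, h⟩ = true then (1:ℕ) else 0) else 0) := by
      intro n
      by_cases hn : n = ⟨k, h⟩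
      · subst hn; simp
      · have : (n : ℕ) ≠ k := by
          intro hc; exact hn (Fin.ext hc)
        simp [hn, this]
    rw [Finset.sum_congr rfl (fun n _ => this n), Finset.sum_ite_eq' Finset.univ]
    simp
  · simp only [dif_neg h]
    refine Finset.sum_eq_zero fun n _ => ?_
    have : (n : ℕ) ≠ k := by have := n.isLt; omega
    simp [this]

lemma cum_mono_k (F : Fin N → Bool) {k l : ℕ} (h : k ≤ l) : cum F k ≤ cum F l := by
  refine Finset.sum_le_sum fun n _ => ?_
  by_cases hF : (n:ℕ) < k ∧ F n = true
  · simp [hF, hF.2, lt_of_lt_of_le hF.1 h]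
  · simp [hF]

lemma cum_le_count (F : Fin N → Bool) (k : ℕ) : cum F k ≤ packetCount F := by
  rw [← cum_of_ge F (le_refl N)]
  rcases le_or_gt k N with h | h
  · exact cum_mono_k F h
  · rw [cum_of_ge F h.le, cum_of_ge F (le_refl N)]

lemma cum_ptwise {F G : Fin N → Bool} (h : ∀ n, F n = true → G n = true) (k : ℕ) :
    cum F k ≤ cum G k := by
  refine Finset.sum_le_sum fun n _ => ?_
  by_cases hF : (n:ℕ) < k ∧ F n = true
  · simp [hF, hF.1, h n hF.2]
  · simp [hF]

lemma eq_of_cum_eq {F G : Fin N → Bool} (h : ∀ k, cum F k = cum G k) : F = G := by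
  funext n
  have h1 := cum_succ F (n : ℕ)
  have h2 := cum_succ G (n : ℕ)
  rw [dif_pos n.isLt] at h1 h2
  have hn : (⟨(n:ℕ), n.isLt⟩ : Fin N) = n := by exact Fin.eta n n.isLt
  rw [hn] at h1 h2
  have := h ((n:ℕ)+1); have := h (n:ℕ)
  by_cases hF : F n = true <;> by_cases hG : G n = true <;>
    simp [hF, hG] at h1 h2 ⊢ <;> omega

lemma cum_const {F : Fin N → Bool} {a b : ℕ} (hab : a ≤ b)
    (h : ∀ p (hp : p < N), a ≤ p → p < b → F ⟨p, hp⟩ = false) : cum F b = cum F a := by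
  induction b with
  | zero => have : a = 0 := by omega
            rw [this]
  | succ b ih =>
    rcases Nat.lt_or_ge a (b+1) with hb | hb
    · have hab' : a ≤ b := by omega
      rw [cum_succ]
      rw [ih hab' (fun p hp h1 h2 => h p hp h1 (by omega))]
      by_cases hbN : b < N
      · rw [dif_pos hbN, h b hbN hab' (by omega)]; simp
      · rw [dif_neg hbN]; simp
    · have : a = b + 1 := by omega
      rw [this]

lemma cum_update_true {F : Fin N → Bool} {m : Fin N} (hm : F m = false) (k : ℕ) :
    cum (Function.update F m true) k = cum F k + if (m : ℕ) < k then 1 else 0 := by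
  unfold cum
  have step : ∀ n : Fin N, (if (n : ℕ) < k ∧ (Function.update F m true) n = true then 1 else 0) =
      (if (n : ℕ) < k ∧ F n = true then 1 else 0) +
      (if n = m then (if (m:ℕ) < k then 1 else 0) else 0) := by
    intro n
    by_cases hn : n = m
    · subst hn; simp [Function.update_self, hm]
    · simp [Function.update_of_ne hn, hn]
  rw [Finset.sum_congr rfl (fun n _ => step n), Finset.sum_add_distrib,
    Finset.sum_ite_eq' Finset.univ]
  simp

lemma cum_update_false {F : Fin N → Bool} {m : Fin N} (hm : F m = true) (k : ℕ) :
    cum F k = cum (Function.update F m false) k + if (m : ℕ) < k then 1 else 0 := by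
  have h1 : (Function.update F m false) m = false := by simp
  have h2 : F = Function.update (Function.update F m false) m true := by
    funext n
    by_cases hn : n = m
    · subst hn; simp [hm]
    · simp [Function.update_of_ne hn]
  conv_lhs => rw [h2]
  rw [cum_update_true h1]

/-- `G` dominates `F`: more packets below every level. -/
def Dom (F G : Fin N → Bool) : Prop := ∀ k, cum F k ≤ cum G k

lemma Dom.count {F G : Fin N → Bool} (h : Dom F G) : packetCount F ≤ packetCount G := by
  have := h N
  rwa [cum_of_ge F (le_refl N), cum_of_ge G (le_refl N)] at this

lemma dom_of_ptwise {F G : Fin N → Bool} (h : ∀ n, F n = true → G n = true) : Dom F G :=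
  fun k => cum_ptwise h k

lemma dom_refl (F : Fin N → Bool) : Dom F F := fun _ => le_rfl

/-- state after Max-λ service: keep packets with at least `M` packets above them. -/
def srvRes (M : ℕ) (F : Fin N → Bool) : Fin N → Bool :=
  fun n => F n && decide (M ≤ (Finset.univ.filter (fun m : Fin N => n < m ∧ F m = true)).card)

lemma tail_partition (F : Fin N → Bool) (n : Fin N) :
    (Finset.univ.filter (fun m : Fin N => n < m ∧ F m = true)).card + cum F ((n:ℕ) + 1)
      = packetCount F := by
  rw [Finset.card_filter]
  unfold cum packetCount
  rw [← Finset.sum_add_distrib]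
  refine Finset.sum_congr rfl fun m _ => ?_
  have hlt : n < m ↔ (n:ℕ) < (m:ℕ) := Iff.rfl
  by_cases hF : F m = true
  · by_cases h : n < m
    · have h2 : ¬ ((m:ℕ) < (n:ℕ) + 1) := by rw [hlt] at h; omega
      simp [hF, h, h2]
    · have h2 : (m:ℕ) < (n:ℕ) + 1 := by rw [hlt] at h; omega
      simp [hF, h, h2]
  · simp [hF]

lemma srvRes_ptwise (M : ℕ) (F : Fin N → Bool) (n : Fin N) (h : srvRes M F n = true) :
    F n = true := by
  unfold srvRes at h
  exact (Bool.and_eq_true _ _ |>.mp h).1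

lemma cum_srvRes {M : ℕ} (hM : 0 < M) (F : Fin N → Bool) (k : ℕ) :
    cum (srvRes M F) k = min (cum F k) (packetCount F - M) := by
  induction k with
  | zero => simp [cum_zero]
  | succ k ih =>
    rw [cum_succ, cum_succ, ih]
    by_cases hk : k < N
    · rw [dif_pos hk, dif_pos hk]
      set n : Fin N := ⟨k, hk⟩ with hn
      by_cases hF : F n = true
      · have hpart := tail_partition F n
        have hc1 : cum F ((n:ℕ) + 1) = cum F (n:ℕ) + 1 := by
          rw [cum_succ, dif_pos n.isLt]
          simp only [Fin.eta, hF]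
          simp
        have hcv : (n : ℕ) = k := rfl
        rw [hcv] at hpart hc1
        have hle : cum F (k+1) ≤ packetCount F := cum_le_count F (k+1)
        unfold srvRes
        rw [hF]
        simp only [Bool.true_and, decide_eq_true_eq]
        by_cases hd : M ≤ (Finset.univ.filter (fun m : Fin N => n < m ∧ F m = true)).card
        · rw [if_pos hd]
          simp only [if_true]
          omega
        · rw [if_neg hd]
          simp only [if_true]
          omega
      · have hF' : F n = false := by simpa using hF
        have hsv : srvRes M F n = false := by unfold srvRes; rw [hF']; rfl
        rw [hsv, hF']
        simp
    · rw [dif_neg hk, dif_neg hk]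
      simp

lemma dom_srvRes {M : ℕ} (hM : 0 < M) {F G : Fin N → Bool} (h : Dom F G) :
    Dom (srvRes M F) (srvRes M G) := by
  intro k
  rw [cum_srvRes hM, cum_srvRes hM]
  exact le_min (min_le_of_left_le (h k))
    (min_le_of_right_le (by have := h.count; omega))

/-- residual of an arbitrary work-conserving service is dominated by the Max-λ residual. -/
lemma dom_residual {M : ℕ} (hM : 0 < M) {G F s : Fin N → Bool}
    (hDom : Dom G F) (hs : ∀ n, s n = true → G n = true)
    (hcnt : packetCount s = min M (packetCount G)) :
    Dom (fun n => G n && !(s n)) (srvRes M F) := by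
  intro k
  rw [cum_srvRes hM]
  set R : Fin N → Bool := fun n => G n && !(s n) with hR
  have hRG : ∀ n, R n = true → G n = true := by
    intro n h
    exact (Bool.and_eq_true _ _ |>.mp h).1
  have hcntR : packetCount R + packetCount s = packetCount G := by
    unfold packetCount
    rw [← Finset.sum_add_distrib]
    refine Finset.sum_congr rfl fun n _ => ?_
    by_cases hsn : s n = true
    · simp [hR, hsn, hs n hsn]
    · simp [hR, hsn]
  refine le_min (le_trans (cum_ptwise hRG k) (hDom k)) ?_
  have h1 : cum R k ≤ packetCount R := cum_le_count R k
  have h2 : packetCount G ≤ packetCount F := hDom.count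
  omega

section Value

variable (M : ℕ) (lam : Fin N → ℝ)

/-- weight (probability) of an arrival vector. -/
def wgt (α : Fin N → Bool) : ℝ := ∏ n, if α n then lam n else 1 - lam n

lemma wgt_nonneg (hlam : ∀ n, 0 < lam n ∧ lam n < 1) (α : Fin N → Bool) : 0 ≤ wgt lam α := by
  refine Finset.prod_nonneg fun n _ => ?_
  by_cases h : α n = true <;> simp [h] <;> nlinarith [(hlam n).1, (hlam n).2]

def joinB (F α : Fin N → Bool) : Fin N → Bool := fun n => F n || α n

/-- value function of the Max-λ system with horizon `t`. -/
def Vmax : ℕ → (List ℕ → ℝ) → (Fin N → Bool) → ℝ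
  | 0, φ, F => φ [packetCount F]
  | t+1, φ, F => ∑ α : Fin N → Bool,
      wgt lam α * Vmax t (fun u => φ (packetCount F :: u)) (joinB (srvRes M F) α)

/-- monotonicity of a trajectory functional. -/
def MonoL (φ : List ℕ → ℝ) : Prop :=
  ∀ ⦃l l' : List ℕ⦄, List.Forall₂ (· ≤ ·) l l' → φ l ≤ φ l'

lemma MonoL.cons {φ : List ℕ → ℝ} (hφ : MonoL φ) (c : ℕ) :
    MonoL (fun u => φ (c :: u)) := by
  intro l l' h
  exact hφ (List.Forall₂.cons le_rfl h)

lemma MonoL.cons_le {φ : List ℕ → ℝ} (hφ : MonoL φ) {c c' : ℕ} (h : c ≤ c') (u : List ℕ) :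
    φ (c :: u) ≤ φ (c' :: u) :=
  hφ (List.Forall₂.cons h (List.forall₂_refl u))

lemma Vmax_mono_phi (hlam : ∀ n, 0 < lam n ∧ lam n < 1) :
    ∀ (t : ℕ) (φ ψ : List ℕ → ℝ), (∀ l, φ l ≤ ψ l) → ∀ F,
      Vmax M lam t φ F ≤ Vmax M lam t ψ F := by
  intro t
  induction t with
  | zero => intro φ ψ h F; exact h _
  | succ t ih =>
    intro φ ψ h F
    refine Finset.sum_le_sum fun α _ => ?_
    exact mul_le_mul_of_nonneg_left (ih _ _ (fun l => h _) _) (wgt_nonneg lam hlam α)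

lemma dom_move {X : Fin N → Bool} {i j : Fin N} (hij : i < j)
    (hXi : X i = false) (hXj : X j = true) :
    Dom X (Function.update (Function.update X j false) i true) := by
  intro k
  have hne : i ≠ j := ne_of_lt hij
  have h1 : (Function.update X j false) i = false := by
    rw [Function.update_of_ne hne]; exact hXi
  have hXk := cum_update_false hXj k
  have h2 := cum_update_true h1 k
  rw [h2]
  have hij' : (i : ℕ) < (j : ℕ) := hij
  rw [hXk]
  split_ifs <;> omega

lemma wgt_factor (lam : Fin N → ℝ) {i j : Fin N} (hij : i ≠ j) (α : Fin N → Bool) :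
    wgt lam α = (if α i then lam i else 1 - lam i) * (if α j then lam j else 1 - lam j) *
      ∏ n ∈ (Finset.univ.erase i).erase j, (if α n then lam n else 1 - lam n) := by
  unfold wgt
  rw [← Finset.mul_prod_erase Finset.univ _ (Finset.mem_univ i)]
  rw [← Finset.mul_prod_erase (Finset.univ.erase i) _
    (Finset.mem_erase.mpr ⟨hij.symm, Finset.mem_univ j⟩)]
  ring

lemma core_alg {a b p V1 V2 V3 : ℝ} (hab : a ≤ b) (ha1 : a ≤ 1) (hb0 : 0 ≤ b) (hb1 : b ≤ 1)
    (hp : 0 ≤ p) (h21 : V2 ≤ V1) (h32 : V3 ≤ V2) :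
    0 ≤ a * (1 - b) * p * (V2 - V1) + (1 - a) * b * p * (V1 - V3) := by
  have hA : 0 ≤ (b - a) * p * (V1 - V2) :=
    mul_nonneg (mul_nonneg (by linarith) hp) (by linarith)
  have hB : 0 ≤ (1 - a) * b * p * (V2 - V3) :=
    mul_nonneg (mul_nonneg (mul_nonneg (by linarith) hb0) hp) (by linarith)
  nlinarith [hA, hB]

lemma move_step (hlam : ∀ n, 0 < lam n ∧ lam n < 1) {t : ℕ}
    (hL1 : ∀ (φ : List ℕ → ℝ) (F G : Fin N → Bool), MonoL φ → Dom F G →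
      Vmax M lam t φ F ≤ Vmax M lam t φ G)
    (φ : List ℕ → ℝ) (hφ : MonoL φ) {B : Fin N → Bool} {i j : Fin N} (hij : i < j)
    (hlamij : lam i ≤ lam j) (hBi : B i = false) (hBj : B j = true) :
    ∑ α : Fin N → Bool, wgt lam α * Vmax M lam t φ (joinB B α) ≤
    ∑ α : Fin N → Bool, wgt lam α *
      Vmax M lam t φ (joinB (Function.update (Function.update B j false) i true) α) := by
  classical
  have hne : i ≠ j := ne_of_lt hij
  set L := Function.update (Function.update B j false) i true with hL
  have hLi : L i = true := by simp [hL]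
  have hLj : L j = false := by
    rw [hL, Function.update_of_ne hne.symm, Function.update_self]
  have hLn : ∀ n, n ≠ i → n ≠ j → L n = B n := by
    intro n h1 h2; rw [hL, Function.update_of_ne h1, Function.update_of_ne h2]
  set V := Vmax M lam t φ with hV
  set e : (Fin N → Bool) → ℝ := fun α => wgt lam α * (V (joinB L α) - V (joinB B α)) with he
  set τ : (Fin N → Bool) → (Fin N → Bool) :=
    fun α => Function.update (Function.update α i (α j)) j (α i) with hτ
  have hτi : ∀ α : Fin N → Bool, τ α i = α j := by
    intro α
    rw [hτ]
    simp only [Function.update_of_ne hne, Function.update_self]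
  have hτj : ∀ α : Fin N → Bool, τ α j = α i := by
    intro α; rw [hτ]; simp
  have hτn : ∀ (α : Fin N → Bool) n, n ≠ i → n ≠ j → τ α n = α n := by
    intro α n h1 h2
    simp only [hτ]
    rw [Function.update_of_ne h2, Function.update_of_ne h1]
  have hτinv : Function.Involutive τ := by
    intro α; funext n
    by_cases h1 : n = i
    · subst h1; rw [hτi, hτj]
    · by_cases h2 : n = j
      · subst h2; rw [hτj, hτi]
      · rw [hτn _ _ h1 h2, hτn _ _ h1 h2]
  have hρτ : ∀ α : Fin N → Bool,
      (∏ n ∈ (Finset.univ.erase i).erase j, (if (τ α) n then lam n else 1 - lam n)) =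
      (∏ n ∈ (Finset.univ.erase i).erase j, (if α n then lam n else 1 - lam n)) := by
    intro α
    refine Finset.prod_congr rfl fun n hn => ?_
    have h2 : n ≠ j := (Finset.mem_erase.mp hn).1
    have h1 : n ≠ i := (Finset.mem_erase.mp (Finset.mem_erase.mp hn).2).1
    rw [hτn _ _ h1 h2]
  have hρ0 : ∀ α : Fin N → Bool,
      0 ≤ ∏ n ∈ (Finset.univ.erase i).erase j, (if α n then lam n else 1 - lam n) := by
    intro α
    refine Finset.prod_nonneg fun n _ => ?_
    by_cases h : α n = true <;> simp [h] <;> nlinarith [(hlam n).1, (hlam n).2]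
  have hpair : ∀ α : Fin N → Bool, 0 ≤ e α + e (τ α) := by
    intro α
    by_cases hai : α i = true <;> by_cases haj : α j = true
    · -- both arrivals: states coincide
      have hBL : joinB B α = joinB L α := by
        funext n
        by_cases h1 : n = i
        · subst h1; simp [joinB, hai]
        · by_cases h2 : n = j
          · subst h2; simp [joinB, haj]
          · simp [joinB, hLn n h1 h2]
      have hBLτ : joinB B (τ α) = joinB L (τ α) := by
        funext n
        by_cases h1 : n = i
        · subst h1; simp [joinB, hτi, haj]
        · by_cases h2 : n = j
          · subst h2; simp [joinB, hτj, hai]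
          · simp [joinB, hLn n h1 h2]
      rw [he]; simp only [hBL, hBLτ]; simp
    · -- α i = true, α j = false
      have haj' : α j = false := Bool.eq_false_iff.mpr haj
      set ρ := ∏ n ∈ (Finset.univ.erase i).erase j, (if α n then lam n else 1 - lam n) with hρ
      have hwα : wgt lam α = lam i * (1 - lam j) * ρ := by
        rw [wgt_factor lam hne α, if_pos hai, if_neg haj]
      have hwτ : wgt lam (τ α) = (1 - lam i) * lam j * ρ := by
        rw [wgt_factor lam hne (τ α), hτi, hτj, if_pos hai, if_neg haj, hρτ α, ← hρ]
      have hS4 : joinB L (τ α) = joinB B α := by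
        funext n
        by_cases h1 : n = i
        · subst h1; simp [joinB, hτi, hLi, hai]
        · by_cases h2 : n = j
          · subst h2; simp [joinB, hτj, hLj, hai, hBj]
          · simp [joinB, hτn _ _ h1 h2, hLn n h1 h2]
      have hd21 : Dom (joinB L α) (joinB B α) := by
        refine dom_of_ptwise fun n h => ?_
        by_cases h1 : n = i
        · subst h1; simp [joinB, hai]
        · by_cases h2 : n = j
          · subst h2; simp [joinB, hBj]
          · rw [joinB] at h ⊢; rwa [hLn n h1 h2] at h
      have hS2eq : joinB L α =
          Function.update (Function.update (joinB B (τ α)) j false) i true := by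
        funext n
        by_cases h1 : n = i
        · subst h1; rw [Function.update_self]; simp [joinB, hLi]
        · by_cases h2 : n = j
          · subst h2
            rw [Function.update_of_ne hne.symm, Function.update_self]
            simp [joinB, hLj, haj']
          · rw [Function.update_of_ne h1, Function.update_of_ne h2]
            simp [joinB, hτn _ _ h1 h2, hLn n h1 h2]
      have hd32 : Dom (joinB B (τ α)) (joinB L α) := by
        rw [hS2eq]
        refine dom_move hij ?_ ?_
        · simp [joinB, hτi, haj', hBi]
        · simp [joinB, hτj, hai]
      have hV21 : V (joinB L α) ≤ V (joinB B α) := hL1 φ _ _ hφ hd21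
      have hV32 : V (joinB B (τ α)) ≤ V (joinB L α) := hL1 φ _ _ hφ hd32
      rw [he]
      simp only [hS4, hwα, hwτ]
      nlinarith [core_alg (a := lam i) (b := lam j) (p := ρ)
        hlamij (hlam i).2.le (hlam j).1.le (hlam j).2.le (hρ0 α) hV21 hV32]
    · -- α i = false, α j = true
      have hai' : α i = false := Bool.eq_false_iff.mpr hai
      set ρ := ∏ n ∈ (Finset.univ.erase i).erase j, (if α n then lam n else 1 - lam n) with hρ
      have hwα : wgt lam α = (1 - lam i) * lam j * ρ := by
        rw [wgt_factor lam hne α, if_neg hai, if_pos haj]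
      have hwτ : wgt lam (τ α) = lam i * (1 - lam j) * ρ := by
        rw [wgt_factor lam hne (τ α), hτi, hτj, if_pos haj, if_neg hai, hρτ α, ← hρ]
      have hS4 : joinB B (τ α) = joinB L α := by
        funext n
        by_cases h1 : n = i
        · subst h1; simp [joinB, hτi, haj, hLi, hBi]
        · by_cases h2 : n = j
          · subst h2; simp [joinB, hτj, hai', hBj, hLj, haj]
          · simp [joinB, hτn _ _ h1 h2, hLn n h1 h2]
      have hd21 : Dom (joinB L (τ α)) (joinB L α) := by
        refine dom_of_ptwise fun n h => ?_
        by_cases h1 : n = i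
        · subst h1; simp [joinB, hLi]
        · by_cases h2 : n = j
          · subst h2; simp [joinB, haj]
          · rw [joinB] at h ⊢; rwa [hτn _ _ h1 h2] at h
      have hS2eq : joinB L (τ α) =
          Function.update (Function.update (joinB B α) j false) i true := by
        funext n
        by_cases h1 : n = i
        · subst h1; rw [Function.update_self]; simp [joinB, hLi]
        · by_cases h2 : n = j
          · subst h2
            rw [Function.update_of_ne hne.symm, Function.update_self]
            simp [joinB, hLj, hτj, hai']
          · rw [Function.update_of_ne h1, Function.update_of_ne h2]
            simp [joinB, hτn _ _ h1 h2, hLn n h1 h2]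
      have hd32 : Dom (joinB B α) (joinB L (τ α)) := by
        rw [hS2eq]
        refine dom_move hij ?_ ?_
        · simp [joinB, hai', hBi]
        · simp [joinB, haj]
      have hV21 : V (joinB L (τ α)) ≤ V (joinB L α) := hL1 φ _ _ hφ hd21
      have hV32 : V (joinB B α) ≤ V (joinB L (τ α)) := hL1 φ _ _ hφ hd32
      rw [he]
      simp only [hS4, hwα, hwτ]
      nlinarith [core_alg (a := lam i) (b := lam j) (p := ρ)
        hlamij (hlam i).2.le (hlam j).1.le (hlam j).2.le (hρ0 α) hV21 hV32]
    · -- no arrival at i or j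
      have hai' : α i = false := Bool.eq_false_iff.mpr hai
      have haj' : α j = false := Bool.eq_false_iff.mpr haj
      have hτα : τ α = α := by
        funext n
        by_cases h1 : n = i
        · subst h1; rw [hτi, haj', hai']
        · by_cases h2 : n = j
          · subst h2; rw [hτj, hai', haj']
          · rw [hτn _ _ h1 h2]
      have hXi : joinB B α i = false := by simp [joinB, hBi, hai']
      have hXj : joinB B α j = true := by simp [joinB, hBj]
      have hS2eq : joinB L α =
          Function.update (Function.update (joinB B α) j false) i true := by
        funext n
        by_cases h1 : n = i
        · subst h1; rw [Function.update_self]; simp [joinB, hLi]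
        · by_cases h2 : n = j
          · subst h2
            rw [Function.update_of_ne hne.symm, Function.update_self]
            simp [joinB, hLj, haj']
          · rw [Function.update_of_ne h1, Function.update_of_ne h2]
            simp [joinB, hLn n h1 h2]
      have hd : Dom (joinB B α) (joinB L α) := by
        rw [hS2eq]; exact dom_move hij hXi hXj
      have h0e : (0:ℝ) ≤ e α := by
        have hee : e α = wgt lam α * (V (joinB L α) - V (joinB B α)) := rfl
        rw [hee]
        exact mul_nonneg (wgt_nonneg lam hlam α)
          (sub_nonneg.mpr (hL1 φ _ _ hφ hd))
      rw [hτα]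
      linarith
  have hsum : ∑ α : Fin N → Bool, e (τ α) = ∑ α : Fin N → Bool, e α :=
    Fintype.sum_bijective τ hτinv.bijective _ _ (fun α => rfl)
  have h0 : 0 ≤ ∑ α : Fin N → Bool, e α := by
    have h2 : (2:ℝ) * ∑ α : Fin N → Bool, e α = ∑ α : Fin N → Bool, (e α + e (τ α)) := by
      rw [Finset.sum_add_distrib, hsum]; ring
    have h3 : 0 ≤ ∑ α : Fin N → Bool, (e α + e (τ α)) :=
      Finset.sum_nonneg fun α _ => hpair α
    linarith
  have hsplit : ∑ α : Fin N → Bool, e α =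
      (∑ α : Fin N → Bool, wgt lam α * V (joinB L α)) -
        ∑ α : Fin N → Bool, wgt lam α * V (joinB B α) := by
    rw [← Finset.sum_sub_distrib]
    refine Finset.sum_congr rfl fun α _ => by rw [he]; ring
  linarith

lemma add_step (hlam : ∀ n, 0 < lam n ∧ lam n < 1) {t : ℕ}
    (hL1 : ∀ (φ : List ℕ → ℝ) (F G : Fin N → Bool), MonoL φ → Dom F G →
      Vmax M lam t φ F ≤ Vmax M lam t φ G)
    (φ : List ℕ → ℝ) (hφ : MonoL φ) (B : Fin N → Bool) (m : Fin N) :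
    ∑ α : Fin N → Bool, wgt lam α * Vmax M lam t φ (joinB B α) ≤
    ∑ α : Fin N → Bool, wgt lam α * Vmax M lam t φ (joinB (Function.update B m true) α) := by
  refine Finset.sum_le_sum fun α _ => mul_le_mul_of_nonneg_left ?_ (wgt_nonneg lam hlam α)
  refine hL1 φ _ _ hφ (dom_of_ptwise fun n h => ?_)
  by_cases h1 : n = m
  · subst h1; simp [joinB]
  · rw [joinB] at h ⊢
    rwa [Function.update_of_ne h1]

lemma avg_dom (hlam : ∀ n, 0 < lam n ∧ lam n < 1) (hlam_mono : Monotone lam) {t : ℕ}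
    (hL1 : ∀ (φ : List ℕ → ℝ) (F G : Fin N → Bool), MonoL φ → Dom F G →
      Vmax M lam t φ F ≤ Vmax M lam t φ G)
    (φ : List ℕ → ℝ) (hφ : MonoL φ) :
    ∀ (d : ℕ) (B L' : Fin N → Bool),
      (∑ k ∈ Finset.range (N+1), (cum L' k - cum B k)) = d → Dom B L' →
      ∑ α : Fin N → Bool, wgt lam α * Vmax M lam t φ (joinB B α) ≤
      ∑ α : Fin N → Bool, wgt lam α * Vmax M lam t φ (joinB L' α) := by
  intro d
  induction d using Nat.strong_induction_on with
  | _ d ih =>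
    intro B L' hd hDom
    by_cases hBL : B = L'
    · subst hBL; exact le_rfl
    · have hex : ∃ k, cum B k < cum L' k := by
        by_contra h
        push_neg at h
        exact hBL (eq_of_cum_eq fun k => le_antisymm (hDom k) (h k))
      set k0 := Nat.find hex with hk0def
      have hk0 : cum B k0 < cum L' k0 := Nat.find_spec hex
      have hk0min : ∀ k < k0, ¬ cum B k < cum L' k := fun k hk => Nat.find_min hex hk
      have hk0pos : 0 < k0 := by
        rcases Nat.eq_zero_or_pos k0 with h | h
        · rw [h] at hk0; rw [cum_zero, cum_zero] at hk0; omega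
        · exact h
      have hk0N : k0 ≤ N := by
        by_contra h
        push_neg at h
        have hBN : cum B N < cum L' N := by
          have e1 : cum B k0 = cum B N := by
            rw [cum_of_ge B (by omega), cum_of_ge B (le_refl N)]
          have e2 : cum L' k0 = cum L' N := by
            rw [cum_of_ge L' (by omega), cum_of_ge L' (le_refl N)]
          omega
        exact hk0min N h hBN
      have hprev : cum B (k0-1) = cum L' (k0-1) :=
        le_antisymm (hDom _) (not_lt.mp (hk0min _ (by omega)))
      have hiN : k0 - 1 < N := by omega
      set i : Fin N := ⟨k0-1, hiN⟩ with hidef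
      have hival : (i:ℕ) = k0 - 1 := rfl
      have hstep : k0 - 1 + 1 = k0 := by omega
      have hcB : cum B k0 = cum B (k0-1) + (if B i = true then 1 else 0) := by
        have h := cum_succ B (k0-1)
        rw [dif_pos hiN, hstep] at h
        exact h
      have hcL : cum L' k0 = cum L' (k0-1) + (if L' i = true then 1 else 0) := by
        have h := cum_succ L' (k0-1)
        rw [dif_pos hiN, hstep] at h
        exact h
      have hBi : B i = false := by
        by_cases h : B i = true
        · rw [if_pos h] at hcB
          by_cases h' : L' i = true
          · rw [if_pos h'] at hcL; omega
          · rw [if_neg h'] at hcL; omega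
        · exact Bool.eq_false_iff.mpr h
      have hBk0 : cum B k0 = cum B (k0-1) := by rw [hcB, hBi]; simp
      have hLgt : cum L' (k0-1) + 1 ≤ cum L' k0 := by omega
      by_cases hj : ∃ m : Fin N, i < m ∧ B m = true
      · -- move a packet from j down to i
        have hSne : (Finset.univ.filter (fun m : Fin N => i < m ∧ B m = true)).Nonempty := by
          obtain ⟨m, hm⟩ := hj
          exact ⟨m, Finset.mem_filter.mpr ⟨Finset.mem_univ m, hm⟩⟩
        set j := (Finset.univ.filter (fun m : Fin N => i < m ∧ B m = true)).min' hSne with hjdef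
        have hjS := (Finset.univ.filter (fun m : Fin N => i < m ∧ B m = true)).min'_mem hSne
        rw [Finset.mem_filter] at hjS
        have hij : i < j := hjS.2.1
        have hBj : B j = true := hjS.2.2
        have hjmin : ∀ m : Fin N, i < m → B m = true → j ≤ m := by
          intro m h1 h2
          exact Finset.min'_le _ m (Finset.mem_filter.mpr ⟨Finset.mem_univ m, h1, h2⟩)
        have hne : i ≠ j := ne_of_lt hij
        set Bm := Function.update B j false with hBmdef
        have hBmi : Bm i = false := by
          rw [hBmdef, Function.update_of_ne hne]; exact hBi
        set B' := Function.update Bm i true with hB'def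
        have e1 : ∀ k, cum B k = cum Bm k + (if (j:ℕ) < k then 1 else 0) :=
          fun k => cum_update_false hBj k
        have e2 : ∀ k, cum B' k = cum Bm k + (if (i:ℕ) < k then 1 else 0) :=
          fun k => cum_update_true hBmi k
        -- B is false on [k0-1, j)
        have hconst : ∀ k, k0 - 1 ≤ k → k ≤ (j:ℕ) → cum B k = cum B (k0-1) := by
          intro k h1 h2
          refine cum_const h1 fun p hp hp1 hp2 => ?_
          by_cases hpi : p = k0 - 1
          · have : (⟨p, hp⟩ : Fin N) = i := by
              rw [hidef]; exact Fin.ext hpi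
            rw [this]; exact hBi
          · by_contra hcon
            have hBp : B ⟨p, hp⟩ = true := by
              cases hq : B ⟨p, hp⟩
              · exact absurd hq hcon
              · rfl
            have h3 : i < (⟨p, hp⟩ : Fin N) := by
              show (i:ℕ) < p
              omega
            have := hjmin _ h3 hBp
            have : (j:ℕ) ≤ p := this
            omega
        have hDom' : Dom B' L' := by
          intro k
          have h1 := e1 k
          have h2 := e2 k
          rcases le_or_gt k (k0 - 1) with hk | hk
          · -- low: nothing changed
            have hik : ¬ (i:ℕ) < k := by omega
            have hjk : ¬ (j:ℕ) < k := by
              have : (i:ℕ) < (j:ℕ) := hij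
              omega
            rw [if_neg hik] at h2
            rw [if_neg hjk] at h1
            have := hDom k
            omega
          · rcases le_or_gt k (j:ℕ) with hkj | hkj
            · have hik : (i:ℕ) < k := by omega
              have hjk : ¬ (j:ℕ) < k := by omega
              rw [if_pos hik] at h2
              rw [if_neg hjk] at h1
              have hc : cum B k = cum B (k0-1) := hconst k (by omega) hkj
              have hm : cum L' k0 ≤ cum L' k := cum_mono_k L' (by omega)
              omega
            · have hik : (i:ℕ) < k := by
                have : (i:ℕ) < (j:ℕ) := hij
                omega
              rw [if_pos hik] at h2
              rw [if_pos hkj] at h1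
              have := hDom k
              omega
        have hlt : (∑ k ∈ Finset.range (N+1), (cum L' k - cum B' k)) < d := by
          rw [← hd]
          refine Finset.sum_lt_sum (fun k _ => ?_) ⟨k0, Finset.mem_range.mpr (by omega), ?_⟩
          · have h1 := e1 k
            have h2 := e2 k
            have h3 := hDom' k
            have : (i:ℕ) < (j:ℕ) := hij
            split_ifs at h1 h2 <;> omega
          · have h1 := e1 k0
            have h2 := e2 k0
            have h3 := hDom' k0
            have hik : (i:ℕ) < k0 := by omega
            have hjk : ¬ (j:ℕ) < k0 := by
              have : (i:ℕ) < (j:ℕ) := hij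
              omega
            rw [if_pos hik] at h2
            rw [if_neg hjk] at h1
            omega
        calc ∑ α : Fin N → Bool, wgt lam α * Vmax M lam t φ (joinB B α)
            ≤ ∑ α : Fin N → Bool, wgt lam α * Vmax M lam t φ (joinB B' α) := by
              have := move_step M lam hlam hL1 φ hφ hij (hlam_mono hij.le) hBi hBj
              simpa [hB'def, hBmdef] using this
          _ ≤ ∑ α : Fin N → Bool, wgt lam α * Vmax M lam t φ (joinB L' α) :=
              ih _ hlt B' L' rfl hDom'
      · -- add a packet at i
        push_neg at hj
        have hjF : ∀ m : Fin N, i < m → B m = false := by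
          intro m hm
          exact Bool.eq_false_iff.mpr (hj m hm)
        set B' := Function.update B i true with hB'def
        have e2 : ∀ k, cum B' k = cum B k + (if (i:ℕ) < k then 1 else 0) :=
          fun k => cum_update_true hBi k
        have hconst : ∀ k, k0 - 1 ≤ k → cum B k = cum B (k0-1) := by
          intro k h1
          refine cum_const h1 fun p hp hp1 hp2 => ?_
          by_cases hpi : p = k0 - 1
          · have : (⟨p, hp⟩ : Fin N) = i := by rw [hidef]; exact Fin.ext hpi
            rw [this]; exact hBi
          · refine hjF _ ?_
            show (i:ℕ) < p
            omega
        have hDom' : Dom B' L' := by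
          intro k
          have h2 := e2 k
          rcases le_or_gt k (k0 - 1) with hk | hk
          · have hik : ¬ (i:ℕ) < k := by omega
            rw [if_neg hik] at h2
            have := hDom k
            omega
          · have hik : (i:ℕ) < k := by omega
            rw [if_pos hik] at h2
            have hc : cum B k = cum B (k0-1) := hconst k (by omega)
            have hm : cum L' k0 ≤ cum L' k := cum_mono_k L' (by omega)
            omega
        have hlt : (∑ k ∈ Finset.range (N+1), (cum L' k - cum B' k)) < d := by
          rw [← hd]
          refine Finset.sum_lt_sum (fun k _ => ?_) ⟨k0, Finset.mem_range.mpr (by omega), ?_⟩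
          · have h2 := e2 k
            have h3 := hDom' k
            split_ifs at h2 <;> omega
          · have h2 := e2 k0
            have h3 := hDom' k0
            have hik : (i:ℕ) < k0 := by omega
            rw [if_pos hik] at h2
            omega
        calc ∑ α : Fin N → Bool, wgt lam α * Vmax M lam t φ (joinB B α)
            ≤ ∑ α : Fin N → Bool, wgt lam α * Vmax M lam t φ (joinB B' α) :=
              add_step M lam hlam hL1 φ hφ B i
          _ ≤ ∑ α : Fin N → Bool, wgt lam α * Vmax M lam t φ (joinB L' α) :=
              ih _ hlt B' L' rfl hDom'

lemma Vmax_dom (hM : 0 < M) (hlam : ∀ n, 0 < lam n ∧ lam n < 1) (hlam_mono : Monotone lam) :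
    ∀ (t : ℕ) (φ : List ℕ → ℝ) (F G : Fin N → Bool), MonoL φ → Dom F G →
      Vmax M lam t φ F ≤ Vmax M lam t φ G := by
  intro t
  induction t with
  | zero =>
    intro φ F G hφ hDom
    exact hφ (List.Forall₂.cons hDom.count List.Forall₂.nil)
  | succ t ih =>
    intro φ F G hφ hDom
    simp only [Vmax]
    calc ∑ α : Fin N → Bool,
          wgt lam α * Vmax M lam t (fun u => φ (packetCount F :: u)) (joinB (srvRes M F) α)
        ≤ ∑ α : Fin N → Bool,
          wgt lam α * Vmax M lam t (fun u => φ (packetCount G :: u)) (joinB (srvRes M F) α) := by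
          refine Finset.sum_le_sum fun α _ => mul_le_mul_of_nonneg_left ?_ (wgt_nonneg lam hlam α)
          exact Vmax_mono_phi M lam hlam t _ _ (fun u => hφ.cons_le hDom.count u) _
      _ ≤ ∑ α : Fin N → Bool,
          wgt lam α * Vmax M lam t (fun u => φ (packetCount G :: u)) (joinB (srvRes M G) α) :=
          avg_dom M lam hlam hlam_mono ih (fun u => φ (packetCount G :: u)) (hφ.cons _) _
            (srvRes M F) (srvRes M G) rfl (dom_srvRes hM hDom)

variable (pol : List (Fin N → Bool) → (Fin N → Bool))

/-- value of a general policy along histories. -/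
def Vpol : ℕ → (List ℕ → ℝ) → List (Fin N → Bool) → ℝ
  | 0, φ, h => φ [packetCount h.headI]
  | t+1, φ, h => ∑ α : Fin N → Bool, wgt lam α *
      Vpol t (fun u => φ (packetCount h.headI :: u)) (nextState h.headI (pol h) α :: h)

lemma Vpol_le_Vmax (hM : 0 < M) (hlam : ∀ n, 0 < lam n ∧ lam n < 1)
    (hlam_mono : Monotone lam) (hwc : WorkConserving M pol) :
    ∀ (t : ℕ) (φ : List ℕ → ℝ) (h : List (Fin N → Bool)) (F : Fin N → Bool),
      MonoL φ → Dom h.headI F → Vpol lam pol t φ h ≤ Vmax M lam t φ F := by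
  intro t
  induction t with
  | zero =>
    intro φ h F hφ hDom
    exact hφ (List.Forall₂.cons hDom.count List.Forall₂.nil)
  | succ t ih =>
    intro φ h F hφ hDom
    simp only [Vpol, Vmax]
    set G := h.headI with hG
    have hwc1 := (hwc h).1
    have hwc2 := (hwc h).2
    have hnext : ∀ α : Fin N → Bool,
        nextState G (pol h) α = joinB (fun n => G n && !(pol h n)) α := fun α => rfl
    calc ∑ α : Fin N → Bool, wgt lam α *
          Vpol lam pol t (fun u => φ (packetCount G :: u)) (nextState G (pol h) α :: h)
        ≤ ∑ α : Fin N → Bool, wgt lam α *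
          Vmax M lam t (fun u => φ (packetCount G :: u)) (joinB (fun n => G n && !(pol h n)) α) := by
          refine Finset.sum_le_sum fun α _ => mul_le_mul_of_nonneg_left ?_ (wgt_nonneg lam hlam α)
          refine ih _ _ _ (hφ.cons _) ?_
          show Dom (nextState G (pol h) α) _
          rw [hnext α]
          exact dom_refl _
      _ ≤ ∑ α : Fin N → Bool, wgt lam α *
          Vmax M lam t (fun u => φ (packetCount G :: u)) (joinB (srvRes M F) α) :=
          avg_dom M lam hlam hlam_mono (Vmax_dom M lam hM hlam hlam_mono t)
            _ (hφ.cons _) _ _ _ rfl (dom_residual hM hDom hwc1 hwc2)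
      _ ≤ ∑ α : Fin N → Bool, wgt lam α *
          Vmax M lam t (fun u => φ (packetCount F :: u)) (joinB (srvRes M F) α) := by
          refine Finset.sum_le_sum fun α _ => mul_le_mul_of_nonneg_left ?_ (wgt_nonneg lam hlam α)
          exact Vmax_mono_phi M lam hlam t _ _ (fun u => hφ.cons_le hDom.count u) _

lemma Vpol_maxpol :
    ∀ (t : ℕ) (φ : List ℕ → ℝ) (h : List (Fin N → Bool)),
      Vpol lam (maxLambdaPol M) t φ h = Vmax M lam t φ h.headI := by
  intro t
  induction t with
  | zero => intro φ h; rfl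
  | succ t ih =>
    intro φ h
    simp only [Vpol, Vmax]
    refine Finset.sum_congr rfl fun α _ => ?_
    rw [ih]
    have hst : nextState h.headI (maxLambdaPol M h) α = joinB (srvRes M h.headI) α := by
      funext n
      unfold nextState maxLambdaPol joinB srvRes
      cases hF : h.headI n <;> simp [hF, ← decide_not, Nat.not_lt]
    show wgt lam α * Vmax M lam t _ (nextState h.headI (maxLambdaPol M h) α :: h).headI =
      wgt lam α * Vmax M lam t _ (joinB (srvRes M h.headI) α)
    rw [show (nextState h.headI (maxLambdaPol M h) α :: h).headI
        = nextState h.headI (maxLambdaPol M h) α from rfl, hst]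

/-- histories continued from an arbitrary prefix. -/
def Hh (h : List (Fin N → Bool)) (a : ℕ → Fin N → Bool) : ℕ → List (Fin N → Bool)
  | 0 => h
  | u+1 => nextState (Hh h a u).headI (pol (Hh h a u)) (a u) :: Hh h a u

lemma Hh_shift (h : List (Fin N → Bool)) (a : ℕ → Fin N → Bool) :
    ∀ u, Hh pol h a (u+1) =
      Hh pol (nextState h.headI (pol h) (a 0) :: h) (fun s => a (s+1)) u := by
  intro u
  induction u with
  | zero => rfl
  | succ u ihu =>
    have hstep : Hh pol h a (u+1+1) =
        nextState (Hh pol h a (u+1)).headI (pol (Hh pol h a (u+1))) (a (u+1))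
          :: Hh pol h a (u+1) := rfl
    rw [hstep, ihu]
    rfl

lemma histories_eq_Hh (F0 : Fin N → Bool) (a : ℕ → Fin N → Bool) :
    ∀ u, histories F0 pol a u = Hh pol ([F0]) a u := by
  intro u
  induction u with
  | zero => rfl
  | succ u ihu =>
    have hstep : histories F0 pol a (u+1) =
        nextState (histories F0 pol a u).headI (pol (histories F0 pol a u)) (a u)
          :: histories F0 pol a u := rfl
    rw [hstep, ihu]
    rfl

/-- list of packet counts along the trajectory determined by a finite arrival pattern. -/
def cntList : (u : ℕ) → List (Fin N → Bool) → (Fin u → (Fin N → Bool)) → List ℕ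
  | 0, h, _ => [packetCount h.headI]
  | u+1, h, v => packetCount h.headI ::
      cntList u (nextState h.headI (pol h) (v 0) :: h) (Fin.tail v)

lemma Vpol_eq_sum :
    ∀ (u : ℕ) (φ : List ℕ → ℝ) (h : List (Fin N → Bool)),
      Vpol lam pol u φ h = ∑ v : Fin u → (Fin N → Bool),
        (∏ s, wgt lam (v s)) * φ (cntList pol u h v) := by
  intro u
  induction u with
  | zero =>
    intro φ h
    simp [Vpol, cntList]
  | succ u ihu =>
    intro φ h
    simp only [Vpol]
    have hre := Fintype.sum_equiv (Fin.consEquiv (fun _ : Fin (u+1) => Fin N → Bool)).symm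
      (fun v : Fin (u+1) → (Fin N → Bool) =>
        (∏ s, wgt lam (v s)) * φ (cntList pol (u+1) h v))
      (fun p : (Fin N → Bool) × (Fin u → (Fin N → Bool)) =>
        wgt lam p.1 * ((∏ s, wgt lam (p.2 s)) *
          φ (packetCount h.headI ::
            cntList pol u (nextState h.headI (pol h) p.1 :: h) p.2)))
      ?_
    · rw [hre, Fintype.sum_prod_type]
      refine Finset.sum_congr rfl fun α _ => ?_
      rw [ihu, Finset.mul_sum]
    · intro v
      show (∏ s, wgt lam (v s)) * φ (cntList pol (u+1) h v) =
        wgt lam (v 0) * ((∏ s : Fin u, wgt lam (v s.succ)) *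
          φ (packetCount h.headI ::
            cntList pol u (nextState h.headI (pol h) (v 0) :: h) (Fin.tail v)))
      rw [Fin.prod_univ_succ]
      rw [show cntList pol (u+1) h v = packetCount h.headI ::
          cntList pol u (nextState h.headI (pol h) (v 0) :: h) (Fin.tail v) from rfl]
      ring

lemma cntList_getD :
    ∀ (u : ℕ) (h : List (Fin N → Bool)) (a : ℕ → Fin N → Bool) (v : Fin u → (Fin N → Bool)),
      (∀ s (hs : s < u), v ⟨s, hs⟩ = a s) →
      ∀ i, i ≤ u → (cntList pol u h v).getD i 0 = packetCount ((Hh pol h a i).headI) := by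
  intro u
  induction u with
  | zero =>
    intro h a v _ i hi
    interval_cases i
    rfl
  | succ u ihu =>
    intro h a v hva i hi
    cases i with
    | zero => rfl
    | succ i' =>
      have hv0 : v 0 = a 0 := hva 0 (by omega)
      have h1 : (cntList pol (u+1) h v).getD (i'+1) 0 =
          (cntList pol u (nextState h.headI (pol h) (v 0) :: h) (Fin.tail v)).getD i' 0 := rfl
      rw [h1, hv0, Hh_shift]
      refine ihu _ _ _ ?_ i' (by omega)
      intro s hs
      have := hva (s+1) (by omega)
      exact this

lemma getD_le_of_forall₂ : ∀ {l l' : List ℕ}, List.Forall₂ (· ≤ ·) l l' →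
    ∀ i, l.getD i 0 ≤ l'.getD i 0 := by
  intro l l' h
  induction h with
  | nil => intro i; simp
  | cons hab _ ih =>
    intro i
    cases i with
    | zero => simpa using hab
    | succ i => simpa using ih i

end Value

end Stmt14

set_option maxHeartbeats 1000000 in
/-- stochastic ordering of total packet processes: for any
work-conserving policy `π`, the total packet process under `π` is stochastically
dominated by that under Max-λ: every monotone measurable functional of the trajectory
exceeds any level `z` with no larger probability. -/
theorem stmt14 {N M : ℕ} (hMN : M < N) (hM : 0 < M)
    (lam : Fin N → ℝ) (hlam_mono : Monotone lam)
    (hlam : ∀ n, 0 < lam n ∧ lam n < 1)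
    {Ω : Type*} [MeasureSpace Ω] (hprob : IsProbabilityMeasure (volume : Measure Ω))
    (A : ℕ → Ω → Fin N → Bool)
    (hAmeas : ∀ t n, Measurable (fun ω => A t ω n))
    (hAdist : ∀ t n, volume {ω | A t ω n = true} = ENNReal.ofReal (lam n))
    (hAindep : iIndepFun
      (fun (p : ℕ × Fin N) ω => A p.1 ω p.2) volume)
    (F0 : Fin N → Bool)
    (pol : List (Fin N → Bool) → (Fin N → Bool))
    (hwc : WorkConserving M pol)
    (t : ℕ) (z : ℝ)
    (g : (Fin (t + 1) → ℝ) → ℝ) (hgmeas : Measurable g) (hgmono : Monotone g) :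
    volume {ω | z < g (fun i =>
        (packetCount (stateAt F0 pol (fun s => A s ω) (i : ℕ)) : ℝ))} ≤
    volume {ω | z < g (fun i =>
        (packetCount (stateAt F0 (maxLambdaPol M) (fun s => A s ω) (i : ℕ)) : ℝ))} := by
  classical
  set gval : List ℕ → ℝ := fun l => g (fun i : Fin (t+1) => ((l.getD (i:ℕ) 0 : ℕ) : ℝ))
    with hgval
  set φg : List ℕ → ℝ := fun l => if z < gval l then (1:ℝ) else 0 with hφg
  have hφmono : Stmt14.MonoL φg := by
    intro l l' hll
    simp only [hφg]
    have hle : gval l ≤ gval l' := by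
      simp only [hgval]
      refine hgmono fun i => ?_
      exact Nat.cast_le.mpr (Stmt14.getD_le_of_forall₂ hll (i:ℕ))
    by_cases hz : z < gval l
    · rw [if_pos hz, if_pos (lt_of_lt_of_le hz hle)]
    · rw [if_neg hz]
      split_ifs <;> norm_num
  have hfact : ∀ (s : ℕ) (n : Fin N) (b : Bool),
      volume {ω | A s ω n = b} = ENNReal.ofReal (if b then lam n else 1 - lam n) := by
    intro s n b
    cases b
    · have hc : {ω | A s ω n = false} = {ω | A s ω n = true}ᶜ := by
        ext ω; simp
      have hms : MeasurableSet {ω | A s ω n = true} := by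
        have : {ω | A s ω n = true} = (fun ω => A s ω n) ⁻¹' {true} := by
          ext ω; simp
        rw [this]
        exact (hAmeas s n) (measurableSet_singleton true)
      rw [hc, prob_compl_eq_one_sub hms, hAdist s n]
      have h1 : ENNReal.ofReal (1 - lam n) = 1 - ENNReal.ofReal (lam n) := by
        rw [ENNReal.ofReal_sub _ (hlam n).1.le, ENNReal.ofReal_one]
      simp [h1]
    · rw [hAdist]; simp
  -- probability of the trajectory event for a general policy
  have key : ∀ P : List (Fin N → Bool) → (Fin N → Bool),
      volume {ω | z < g (fun i =>
          (packetCount (stateAt F0 P (fun s => A s ω) (i : ℕ)) : ℝ))}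
        = ENNReal.ofReal (Stmt14.Vpol lam P t φg ([F0])) := by
    intro P
    set X : Ω → (Fin t × Fin N → Bool) := fun ω p => A (p.1 : ℕ) ω p.2 with hX
    set cyl : (Fin t × Fin N → Bool) → Set Ω :=
      fun ν => {ω | ∀ p : Fin t × Fin N, A (p.1:ℕ) ω p.2 = ν p} with hcyl
    have hcylm : ∀ ν, MeasurableSet (cyl ν) := by
      intro ν
      have h1 : cyl ν = ⋂ p : Fin t × Fin N, (fun ω => A (p.1:ℕ) ω p.2) ⁻¹' {ν p} := by
        ext ω; simp [hcyl]
      rw [h1]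
      exact MeasurableSet.iInter fun p => (hAmeas _ _) (measurableSet_singleton _)
    have hpath : ∀ ω : Ω, (fun i : Fin (t+1) =>
        (packetCount (stateAt F0 P (fun s => A s ω) (i:ℕ)) : ℝ)) =
        fun i : Fin (t+1) =>
          (((Stmt14.cntList P t ([F0]) (fun s n => X ω (s, n))).getD (i:ℕ) 0 : ℕ) : ℝ) := by
      intro ω
      funext i
      congr 1
      rw [stateAt, Stmt14.histories_eq_Hh]
      have hi : (i:ℕ) ≤ t := by have := i.isLt; omega
      rw [Stmt14.cntList_getD P t ([F0]) (fun s => A s ω)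
        (fun s n => X ω (s, n)) (fun s hs => rfl) (i:ℕ) hi]
    -- decompose the event into cylinders
    have hset : {ω | z < g (fun i =>
        (packetCount (stateAt F0 P (fun s => A s ω) (i : ℕ)) : ℝ))} =
        ⋃ ν ∈ Finset.univ.filter (fun ν : Fin t × Fin N → Bool =>
          z < gval (Stmt14.cntList P t ([F0]) (fun s n => ν (s,n)))), cyl ν := by
      ext ω
      simp only [Set.mem_setOf_eq, Set.mem_iUnion, Finset.mem_filter, Finset.mem_univ,
        true_and, exists_prop]
      constructor
      · intro h
        refine ⟨X ω, ?_, fun p => rfl⟩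
        rw [hpath ω] at h
        exact h
      · rintro ⟨ν, hν, hcylν⟩
        have hXν : X ω = ν := funext fun p => hcylν p
        rw [hpath ω, hXν]
        exact hν
    rw [hset, measure_biUnion_finset ?_ (fun ν _ => hcylm ν)]
    · -- compute each cylinder probability
      have hcylval : ∀ ν : Fin t × Fin N → Bool, volume (cyl ν) =
          ENNReal.ofReal (∏ p : Fin t × Fin N,
            (if ν p then lam p.2 else 1 - lam p.2)) := by
        intro ν
        have hinj : ∀ p ∈ Finset.univ, ∀ q ∈ Finset.univ,
            (fun p : Fin t × Fin N => ((p.1:ℕ), p.2)) p =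
            (fun p : Fin t × Fin N => ((p.1:ℕ), p.2)) q → p = q := by
          intro p _ q _ h
          simp only [Prod.mk.injEq] at h
          exact Prod.ext (Fin.ext h.1) h.2
        set S : Finset (ℕ × Fin N) :=
          Finset.image (fun p : Fin t × Fin N => ((p.1:ℕ), p.2)) Finset.univ with hS
        set sets : ℕ × Fin N → Set Ω := fun q =>
          (fun ω => A q.1 ω q.2) ⁻¹' {if h : q.1 < t then ν (⟨q.1, h⟩, q.2) else true}
          with hsets
        have h1 : cyl ν = ⋂ q ∈ S, sets q := by
          ext ω
          simp only [hcyl, Set.mem_setOf_eq, Set.mem_iInter, hS, Finset.mem_image,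
            Finset.mem_univ, true_and]
          constructor
          · rintro h q ⟨p, rfl⟩
            simp only [hsets, Set.mem_preimage, Set.mem_singleton_iff, dif_pos p.1.isLt,
              Fin.eta]
            exact h p
          · intro h p
            have := h ((p.1:ℕ), p.2) ⟨p, rfl⟩
            simpa only [hsets, Set.mem_preimage, Set.mem_singleton_iff, dif_pos p.1.isLt,
              Fin.eta] using this
        have h2 : volume (⋂ q ∈ S, sets q) = ∏ q ∈ S, volume (sets q) := by
          refine hAindep.meas_biInter fun q hq => ?_
          exact ⟨{if h : q.1 < t then ν (⟨q.1, h⟩, q.2) else true}, trivial, rfl⟩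
        rw [h1, h2, Finset.prod_image hinj]
        have h3 : ∀ p : Fin t × Fin N,
            volume (sets ((p.1:ℕ), p.2)) =
            ENNReal.ofReal (if ν p then lam p.2 else 1 - lam p.2) := by
          intro p
          have hq : sets ((p.1:ℕ), p.2) = {ω | A (p.1:ℕ) ω p.2 = ν p} := by
            ext ω
            simp [hsets, dif_pos p.1.isLt]
          rw [hq, hfact]
        rw [Finset.prod_congr rfl (fun p _ => h3 p)]
        rw [← ENNReal.ofReal_prod_of_nonneg]
        intro p _
        split_ifs with h
        · exact (hlam p.2).1.le
        · nlinarith [(hlam p.2).2]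
      rw [Finset.sum_congr rfl (fun ν _ => hcylval ν)]
      rw [← ENNReal.ofReal_sum_of_nonneg (fun ν _ => Finset.prod_nonneg fun p _ => by
        split_ifs with h
        · exact (hlam p.2).1.le
        · nlinarith [(hlam p.2).2])]
      congr 1
      rw [Finset.sum_filter, Stmt14.Vpol_eq_sum lam P t φg ([F0])]
      refine Fintype.sum_equiv (Equiv.curry (Fin t) (Fin N) Bool) _ _ fun ν => ?_
      have hw : (∏ p : Fin t × Fin N, (if ν p then lam p.2 else 1 - lam p.2)) =
          ∏ s : Fin t, Stmt14.wgt lam (fun n => ν (s, n)) := by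
        rw [Fintype.prod_prod_type]
        rfl
      show (if z < gval (Stmt14.cntList P t ([F0]) fun s n => ν (s, n)) then
          (∏ p : Fin t × Fin N, (if ν p then lam p.2 else 1 - lam p.2)) else 0) =
        (∏ s : Fin t, Stmt14.wgt lam ((Equiv.curry (Fin t) (Fin N) Bool) ν s)) *
          φg (Stmt14.cntList P t ([F0]) ((Equiv.curry (Fin t) (Fin N) Bool) ν))
      rw [hφg]
      simp only [Equiv.curry_apply, Function.curry]
      rw [mul_ite, mul_one, mul_zero, hw]
      rfl
    · -- cylinders are pairwise disjoint
      intro ν1 _ ν2 _ hne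
      refine Set.disjoint_left.mpr fun ω hω1 hω2 => hne ?_
      exact funext fun p => (hω1 p).symm.trans (hω2 p)
  rw [key pol, key (maxLambdaPol M)]
  refine ENNReal.ofReal_le_ofReal ?_
  rw [Stmt14.Vpol_maxpol M lam t φg ([F0])]
  exact Stmt14.Vpol_le_Vmax M lam pol hM hlam hlam_mono hwc t φg ([F0]) F0 hφmono
    (Stmt14.dom_refl F0)
end

section
/- (Corollary 1) In the N single-buffer queue system with M servers, Bernoulli(λ_n) arrivals with λ_1 ≤ … ≤ λ_N, 0 < λ_n < 1, and a fixed initial state F(0): for every work-conserving policy π and every slot t, the expected number of packets transmitted satisfies E[S^π(t)] ≤ E[S^{Max-λ}(t)], where S(t) = min(M, U(t)) is the number of packets transmitted on slot t. Consequently, the Max-λ policy maximizes throughput within the class of work-conserving policies. -/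
open MeasureTheory ProbabilityTheory Finset

namespace S15

variable {N : ℕ}

/-- weight of an arrival vector -/
def wt (lam : Fin N → ℝ) (a : Fin N → Bool) : ℝ :=
  ∏ n, (if a n then lam n else 1 - lam n)

/-- expectation over one slot of arrivals -/
def Ea (lam : Fin N → ℝ) (g : (Fin N → Bool) → ℝ) : ℝ :=
  ∑ a : Fin N → Bool, wt lam a * g a

/-- number of occupied queues above `n` -/
def cnt (F : Fin N → Bool) (n : Fin N) : ℕ :=
  (Finset.univ.filter (fun m : Fin N => n < m ∧ F m = true)).card

/-- queues kept (not served) by Max-λ -/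
def keep (M : ℕ) (F : Fin N → Bool) : Fin N → Bool :=
  fun n => F n && !(decide (cnt F n < M))

def fM (M : ℕ) (F : Fin N → Bool) : ℝ := min (M : ℝ) ((packetCount F : ℕ) : ℝ)

/-- value function of Max-λ with horizon `h` -/
def G (M : ℕ) (lam : Fin N → ℝ) : ℕ → (Fin N → Bool) → ℝ
  | 0, F => fM M F
  | h+1, F => Ea lam (fun a => G M lam h (fun n => keep M F n || a n))

/-- expected value after `h` slots under a general policy -/
def EV (M : ℕ) (lam : Fin N → ℝ) (pol : List (Fin N → Bool) → (Fin N → Bool)) :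
    ℕ → List (Fin N → Bool) → ℝ
  | 0, L => fM M L.headI
  | h+1, L => Ea lam (fun a => EV M lam pol h (nextState L.headI (pol L) a :: L))

variable {lam : Fin N → ℝ}

section basic

lemma wt_nonneg (h0 : ∀ n, 0 ≤ lam n) (h1 : ∀ n, lam n ≤ 1) (a : Fin N → Bool) :
    0 ≤ wt lam a := by
  apply Finset.prod_nonneg
  intro n _
  by_cases h : a n <;> simp [h] <;> [exact h0 n; linarith [h1 n]]

lemma Ea_mono (h0 : ∀ n, 0 ≤ lam n) (h1 : ∀ n, lam n ≤ 1) {g g' : (Fin N → Bool) → ℝ}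
    (hg : ∀ a, g a ≤ g' a) : Ea lam g ≤ Ea lam g' := by
  apply Finset.sum_le_sum
  intro a _
  exact mul_le_mul_of_nonneg_left (hg a) (wt_nonneg h0 h1 a)

lemma Ea_congr {g g' : (Fin N → Bool) → ℝ} (hg : ∀ a, g a = g' a) :
    Ea lam g = Ea lam g' := by
  apply Finset.sum_congr rfl
  intro a _; rw [hg a]

lemma sum_split (i : Fin N) (φ : (Fin N → Bool) → ℝ) :
    ∑ a : Fin N → Bool, φ a
      = ∑ a ∈ Finset.univ.filter (fun a : Fin N → Bool => a i = false),
          (φ a + φ (Function.update a i true)) := by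
  rw [Finset.sum_add_distrib]
  rw [← Finset.sum_filter_add_sum_filter_not Finset.univ
    (fun a : Fin N → Bool => a i = false) φ]
  congr 1
  apply Finset.sum_nbij' (fun a => Function.update a i false)
    (fun a => Function.update a i true)
  · intro a ha
    simp only [Finset.mem_filter, Finset.mem_univ, true_and] at *
    simp
  · intro a ha
    simp only [Finset.mem_filter, Finset.mem_univ, true_and] at *
    simp
  · intro a ha
    simp only [Finset.mem_filter, Finset.mem_univ, true_and] at ha
    rw [Function.update_idem]
    simp only [Bool.not_eq_false] at ha
    rw [← ha, Function.update_eq_self]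
  · intro a ha
    simp only [Finset.mem_filter, Finset.mem_univ, true_and] at ha
    rw [Function.update_idem, ← ha, Function.update_eq_self]
  · intro a ha
    simp only [Finset.mem_filter, Finset.mem_univ, true_and, Bool.not_eq_false] at ha
    rw [Function.update_idem, ← ha, Function.update_eq_self]

lemma wt_update (a : Fin N → Bool) (i : Fin N) (b : Bool) :
    wt lam (Function.update a i b)
      = (if b then lam i else 1 - lam i) * ∏ n ∈ Finset.univ.erase i,
          (if a n then lam n else 1 - lam n) := by
  unfold wt
  have : (fun n => if Function.update a i b n then lam n else 1 - lam n)
      = Function.update (fun n => if a n then lam n else 1 - lam n) i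
          (if b then lam i else 1 - lam i) := by
    funext n
    by_cases h : n = i
    · subst h; simp
    · simp [Function.update_of_ne h]
  rw [this, Finset.prod_update_of_mem (Finset.mem_univ i), ← Finset.erase_eq]

lemma Ea_cond (i : Fin N) (g : (Fin N → Bool) → ℝ) :
    Ea lam g = lam i * Ea lam (fun a => g (Function.update a i true))
      + (1 - lam i) * Ea lam (fun a => g (Function.update a i false)) := by
  unfold Ea
  rw [Finset.mul_sum, Finset.mul_sum, ← Finset.sum_add_distrib]
  rw [sum_split i (fun a => wt lam a * g a),
      sum_split i (fun a => lam i * (wt lam a * g (Function.update a i true))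
        + (1 - lam i) * (wt lam a * g (Function.update a i false)))]
  apply Finset.sum_congr rfl
  intro a ha
  simp only [Finset.mem_filter, Finset.mem_univ, true_and] at ha
  have ha' : Function.update a i false = a := by
    rw [← ha, Function.update_eq_self]
  have h1 : Function.update (Function.update a i true) i true
      = Function.update a i true := by rw [Function.update_idem]
  have h2 : Function.update (Function.update a i true) i false = a := by
    rw [Function.update_idem, ha']
  have hwa : wt lam a = (1 - lam i) * ∏ n ∈ Finset.univ.erase i,
      (if a n then lam n else 1 - lam n) := by
    conv_lhs => rw [← ha']
    rw [wt_update]; simp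
  have hwa' : wt lam (Function.update a i true) = lam i * ∏ n ∈ Finset.univ.erase i,
      (if a n then lam n else 1 - lam n) := by
    rw [wt_update]; simp
  rw [h1, h2, ha', hwa, hwa']
  ring

end basic

section core

variable (M : ℕ)

lemma pc_mono {F F' : Fin N → Bool} (h : ∀ n, F n = true → F' n = true) :
    packetCount F ≤ packetCount F' := by
  apply Finset.sum_le_sum
  intro n _
  by_cases hF : F n = true
  · simp [hF, h n hF]
  · simp [hF]

lemma fM_mono {F F' : Fin N → Bool} (h : ∀ n, F n = true → F' n = true) :
    fM M F ≤ fM M F' := by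
  unfold fM
  exact min_le_min le_rfl (by exact_mod_cast pc_mono h)

lemma pc_update (F : Fin N → Bool) (z : Fin N) (b : Bool) :
    packetCount (Function.update F z b) + (if F z then 1 else 0)
      = packetCount F + (if b then 1 else 0) := by
  unfold packetCount
  have h : (fun n => if Function.update F z b n then (1:ℕ) else 0)
      = Function.update (fun n => if F n then (1:ℕ) else 0) z (if b then 1 else 0) := by
    funext n
    by_cases hn : n = z
    · subst hn; simp
    · simp [Function.update_of_ne hn]
  calc (∑ n, if Function.update F z b n then (1:ℕ) else 0) + (if F z then 1 else 0)
      = ((if b then 1 else 0) + ∑ n ∈ Finset.univ.erase z, if F n then (1:ℕ) else 0)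
          + (if F z then 1 else 0) := by
        rw [show (∑ n, if Function.update F z b n then (1:ℕ) else 0)
            = ∑ n, (Function.update (fun n => if F n then (1:ℕ) else 0) z
                (if b then 1 else 0)) n from by rw [← h],
          Finset.sum_update_of_mem (Finset.mem_univ z), Finset.erase_eq]
    _ = (∑ n, if F n then (1:ℕ) else 0) + (if b then 1 else 0) := by
        rw [← Finset.add_sum_erase Finset.univ _ (Finset.mem_univ z), Finset.erase_eq]
        ring

def sumIdx (F : Fin N → Bool) : ℕ := ∑ n, if F n then (n : ℕ) else 0

lemma sumIdx_update (F : Fin N → Bool) (z : Fin N) (b : Bool) :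
    sumIdx (Function.update F z b) + (if F z then (z:ℕ) else 0)
      = sumIdx F + (if b then (z:ℕ) else 0) := by
  unfold sumIdx
  have h : (fun n => if Function.update F z b n then (n:ℕ) else 0)
      = Function.update (fun n => if F n then (n:ℕ) else 0) z (if b then (z:ℕ) else 0) := by
    funext n
    by_cases hn : n = z
    · subst hn; simp
    · simp [Function.update_of_ne hn]
  calc (∑ n, if Function.update F z b n then (n:ℕ) else 0) + (if F z then (z:ℕ) else 0)
      = ((if b then (z:ℕ) else 0) + ∑ n ∈ Finset.univ.erase z, if F n then (n:ℕ) else 0)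
          + (if F z then (z:ℕ) else 0) := by
        rw [show (∑ n, if Function.update F z b n then (n:ℕ) else 0)
            = ∑ n, (Function.update (fun n => if F n then (n:ℕ) else 0) z
                (if b then (z:ℕ) else 0)) n from by rw [← h],
          Finset.sum_update_of_mem (Finset.mem_univ z), Finset.erase_eq]
    _ = (∑ n, if F n then (n:ℕ) else 0) + (if b then (z:ℕ) else 0) := by
        rw [← Finset.add_sum_erase Finset.univ _ (Finset.mem_univ z), Finset.erase_eq]
        ring

lemma cnt_congr {F F' : Fin N → Bool} (n : Fin N) (h : ∀ m, n < m → F m = F' m) :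
    cnt F n = cnt F' n := by
  unfold cnt
  congr 1
  ext m
  simp only [Finset.mem_filter, Finset.mem_univ, true_and]
  constructor
  · rintro ⟨h1, h2⟩; exact ⟨h1, by rw [← h m h1]; exact h2⟩
  · rintro ⟨h1, h2⟩; exact ⟨h1, by rw [h m h1]; exact h2⟩

lemma cnt_mono {F F' : Fin N → Bool} (h : ∀ m, F m = true → F' m = true) (n : Fin N) :
    cnt F n ≤ cnt F' n := by
  apply Finset.card_le_card
  intro m hm
  simp only [Finset.mem_filter, Finset.mem_univ, true_and] at *
  exact ⟨hm.1, h m hm.2⟩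

lemma keep_mono {F F' : Fin N → Bool} (h : ∀ n, F n = true → F' n = true) :
    ∀ n, keep M F n = true → keep M F' n = true := by
  intro n hn
  simp only [keep, Bool.and_eq_true, Bool.not_eq_true', decide_eq_false_iff_not,
    Nat.not_lt] at *
  exact ⟨h n hn.1, le_trans hn.2 (cnt_mono h n)⟩

end core
section KL

variable (M : ℕ)

lemma KL (h0 : ∀ n, 0 ≤ lam n) (h1 : ∀ n, lam n ≤ 1)
    (hmono : ∀ i j : Fin N, i ≤ j → lam i ≤ lam j)
    (H : (Fin N → Bool) → ℝ)
    (hS1 : ∀ F F' : Fin N → Bool, (∀ n, F n = true → F' n = true) → H F ≤ H F')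
    (hS2 : ∀ (F : Fin N → Bool) (i j : Fin N), i < j →
      H (Function.update (Function.update F i false) j true)
        ≤ H (Function.update (Function.update F j false) i true))
    (i j : Fin N) (hij : i < j) (C : Fin N → Bool) (hCi : C i = false) (hCj : C j = false) :
    Ea lam (fun a => H (fun n => Function.update C j true n || a n))
      ≤ Ea lam (fun a => H (fun n => Function.update C i true n || a n)) := by
  have hne : i ≠ j := ne_of_lt hij
  set q : Bool → Bool → ℝ := fun x y =>
    Ea lam (fun a => H (Function.update (Function.update (fun n => C n || a n) i x) j y))
    with hq
  have eL : ∀ (a : Fin N → Bool) (x : Bool),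
      (fun n => Function.update C j true n || Function.update a i x n)
        = Function.update (Function.update (fun n => C n || a n) i x) j true := by
    intro a x
    funext n
    by_cases h1 : n = j
    · subst h1; simp [Function.update_of_ne hne.symm]
    · by_cases h2 : n = i
      · subst h2; simp [Function.update_of_ne h1, hCi]
      · simp [Function.update_of_ne h1, Function.update_of_ne h2]
  have eR : ∀ (a : Fin N → Bool) (y : Bool),
      (fun n => Function.update C i true n || Function.update a j y n)
        = Function.update (Function.update (fun n => C n || a n) i true) j y := by
    intro a y
    funext n
    by_cases h1 : n = j
    · subst h1; simp [Function.update_of_ne hne.symm, hCj]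
    · by_cases h2 : n = i
      · subst h2; simp [Function.update_of_ne h1]
      · simp [Function.update_of_ne h1, Function.update_of_ne h2]
  have hLHS : Ea lam (fun a => H (fun n => Function.update C j true n || a n))
      = lam i * q true true + (1 - lam i) * q false true := by
    rw [Ea_cond i (fun a => H (fun n => Function.update C j true n || a n))]
    congr 1
    · congr 1; apply Ea_congr; intro a; rw [eL a true]
    · congr 1; apply Ea_congr; intro a; rw [eL a false]
  have hRHS : Ea lam (fun a => H (fun n => Function.update C i true n || a n))
      = lam j * q true true + (1 - lam j) * q true false := by
    rw [Ea_cond j (fun a => H (fun n => Function.update C i true n || a n))]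
    congr 1
    · congr 1; apply Ea_congr; intro a; rw [eR a true]
    · congr 1; apply Ea_congr; intro a; rw [eR a false]
  rw [hLHS, hRHS]
  have hq1 : q false true ≤ q true true := by
    apply Ea_mono h0 h1
    intro a
    apply hS1
    intro n
    by_cases h1 : n = j
    · subst h1; simp
    · by_cases h2 : n = i
      · subst h2; simp [Function.update_of_ne h1]
      · simp [Function.update_of_ne h1, Function.update_of_ne h2]
  have hq2 : q false true ≤ q true false := by
    apply Ea_mono h0 h1
    intro a
    have := hS2 (fun n => C n || a n) i j hij
    rwa [Function.update_comm (Ne.symm hne) false true (fun n => C n || a n)] at this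
  have hlam : lam i ≤ lam j := hmono i j (le_of_lt hij)
  nlinarith [mul_nonneg (sub_nonneg.2 hlam) (sub_nonneg.2 hq1),
    mul_nonneg (sub_nonneg.2 (h1 j)) (sub_nonneg.2 hq2)]

end KL
section DP

variable (M : ℕ)

lemma S1G (h0 : ∀ n, 0 ≤ lam n) (h1 : ∀ n, lam n ≤ 1) :
    ∀ (h : ℕ) (F F' : Fin N → Bool), (∀ n, F n = true → F' n = true) →
      G M lam h F ≤ G M lam h F' := by
  intro h
  induction h with
  | zero => intro F F' hFF; simpa [G] using fM_mono M hFF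
  | succ h IH =>
    intro F F' hFF
    simp only [G]
    apply Ea_mono h0 h1
    intro a
    apply IH
    intro n
    simp only [Bool.or_eq_true]
    rintro (hk | ha)
    · exact Or.inl (keep_mono M hFF n hk)
    · exact Or.inr ha

lemma adj_step (h0 : ∀ n, 0 ≤ lam n) (h1 : ∀ n, lam n ≤ 1)
    (hmono : ∀ i j : Fin N, i ≤ j → lam i ≤ lam j) (h : ℕ)
    (hS2h : ∀ (F : Fin N → Bool) (i j : Fin N), i < j →
      G M lam h (Function.update (Function.update F i false) j true)
        ≤ G M lam h (Function.update (Function.update F j false) i true))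
    (F : Fin N → Bool) (i j : Fin N) (hij : i < j) (hadj : (j:ℕ) = (i:ℕ) + 1) :
    G M lam (h+1) (Function.update (Function.update F i false) j true)
      ≤ G M lam (h+1) (Function.update (Function.update F j false) i true) := by
  have hne : i ≠ j := ne_of_lt hij
  set B : Fin N → Bool := Function.update (Function.update F i false) j true with hB
  set A : Fin N → Bool := Function.update (Function.update F j false) i true with hA
  have hAj : A j = false := by rw [hA, Function.update_of_ne (Ne.symm hne)]; simp
  have hAi : A i = true := by rw [hA]; simp
  have hBj : B j = true := by rw [hB]; simp
  have hBi : B i = false := by rw [hB, Function.update_of_ne hne]; simp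
  have hAo : ∀ n, n ≠ i → n ≠ j → A n = F n := by
    intro n h1' h2'; rw [hA, Function.update_of_ne h1', Function.update_of_ne h2']
  have hBo : ∀ n, n ≠ i → n ≠ j → B n = F n := by
    intro n h1' h2'; rw [hB, Function.update_of_ne h2', Function.update_of_ne h1']
  have hgt : ∀ m : Fin N, j < m → m ≠ i ∧ m ≠ j := by
    intro m hm
    constructor
    · intro e; subst e; exact absurd (lt_trans hij hm) (lt_irrefl _)
    · intro e; subst e; exact absurd hm (lt_irrefl _)
  have hcAj : cnt A j = cnt F j := cnt_congr j (fun m hm => hAo m (hgt m hm).1 (hgt m hm).2)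
  have hcBj : cnt B j = cnt F j := cnt_congr j (fun m hm => hBo m (hgt m hm).1 (hgt m hm).2)
  have hcAi : cnt A i = cnt F j := by
    rw [← hcAj]
    unfold cnt
    congr 1
    ext m
    simp only [Finset.mem_filter, Finset.mem_univ, true_and]
    constructor
    · rintro ⟨hm1, hm2⟩
      refine ⟨?_, hm2⟩
      by_cases hmj : m = j
      · subst hmj; rw [hAj] at hm2; exact absurd hm2 (by simp)
      · have h1' : (i:ℕ) < (m:ℕ) := (Fin.lt_def).1 hm1
        have h2' : (m:ℕ) ≠ (j:ℕ) := fun e => hmj (Fin.ext e)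
        exact (Fin.lt_def).2 (by omega)
    · rintro ⟨hm1, hm2⟩; exact ⟨lt_trans hij hm1, hm2⟩
  have hkAj : keep M A j = false := by simp [keep, hAj]
  have hkBi : keep M B i = false := by simp [keep, hBi]
  have hko : ∀ n, n ≠ i → n ≠ j → keep M A n = keep M B n := by
    intro n hni hnj
    have hval : A n = B n := by rw [hAo n hni hnj, hBo n hni hnj]
    have hcnt : cnt A n = cnt B n := by
      by_cases hlt : j < n
      · have hgt' : ∀ m, n < m → (m ≠ i ∧ m ≠ j) := fun m hm => hgt m (lt_trans hlt hm)
        rw [cnt_congr n (fun m hm => hAo m (hgt' m hm).1 (hgt' m hm).2),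
            cnt_congr n (fun m hm => hBo m (hgt' m hm).1 (hgt' m hm).2)]
      · have hni' : (n:ℕ) < (i:ℕ) := by
          have e1 : (n:ℕ) ≠ (i:ℕ) := fun e => hni (Fin.ext e)
          have e2 : (n:ℕ) ≠ (j:ℕ) := fun e => hnj (Fin.ext e)
          have e3 : ¬ (j:ℕ) < (n:ℕ) := fun e => hlt ((Fin.lt_def).2 e)
          omega
        have hiA : i ∈ Finset.univ.filter (fun m => n < m ∧ A m = true) := by
          simp only [Finset.mem_filter, Finset.mem_univ, true_and]
          exact ⟨(Fin.lt_def).2 hni', hAi⟩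
        have hjB : j ∈ Finset.univ.filter (fun m => n < m ∧ B m = true) := by
          simp only [Finset.mem_filter, Finset.mem_univ, true_and]
          exact ⟨(Fin.lt_def).2 (by omega), hBj⟩
        have herase : (Finset.univ.filter (fun m => n < m ∧ A m = true)).erase i
            = (Finset.univ.filter (fun m => n < m ∧ B m = true)).erase j := by
          ext m
          simp only [Finset.mem_erase, Finset.mem_filter, Finset.mem_univ, true_and]
          constructor
          · rintro ⟨hmi, hmn, hmA⟩
            by_cases hmj : m = j
            · subst hmj; rw [hAj] at hmA; exact absurd hmA (by simp)
            · refine ⟨hmj, hmn, ?_⟩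
              rw [hBo m hmi hmj, ← hAo m hmi hmj]; exact hmA
          · rintro ⟨hmj, hmn, hmB⟩
            by_cases hmi : m = i
            · subst hmi; rw [hBi] at hmB; exact absurd hmB (by simp)
            · refine ⟨hmi, hmn, ?_⟩
              rw [hAo m hmi hmj, ← hBo m hmi hmj]; exact hmB
        have c1 := Finset.card_erase_add_one hiA
        have c2 := Finset.card_erase_add_one hjB
        rw [herase] at c1
        unfold cnt
        omega
    simp only [keep]
    rw [hval, hcnt]
  by_cases hMt : M ≤ cnt F j
  · have hnotlt : ¬ (cnt F j < M) := not_lt.mpr hMt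
    set C : Fin N → Bool := Function.update (keep M A) i false with hC
    have hCi : C i = false := by rw [hC]; simp
    have hCj : C j = false := by rw [hC, Function.update_of_ne (Ne.symm hne)]; exact hkAj
    have hkA : keep M A = Function.update C i true := by
      funext n
      by_cases hni : n = i
      · subst hni; simp only [Function.update_self]; simp [keep, hAi, hcAi, hnotlt]
      · rw [Function.update_of_ne hni, hC, Function.update_of_ne hni]
    have hkB : keep M B = Function.update C j true := by
      funext n
      by_cases hnj : n = j
      · subst hnj; simp only [Function.update_self]; simp [keep, hBj, hcBj, hnotlt]
      · rw [Function.update_of_ne hnj]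
        by_cases hni : n = i
        · subst hni; rw [hkBi, hCi]
        · rw [← hko n hni hnj, hC, Function.update_of_ne hni]
    calc G M lam (h+1) B
        = Ea lam (fun a => G M lam h (fun n => Function.update C j true n || a n)) := by
          simp only [G]; apply Ea_congr; intro a; rw [hkB]
      _ ≤ Ea lam (fun a => G M lam h (fun n => Function.update C i true n || a n)) :=
          KL h0 h1 hmono (G M lam h) (S1G M h0 h1 h) hS2h i j hij C hCi hCj
      _ = G M lam (h+1) A := by
          simp only [G]; apply Ea_congr; intro a; rw [hkA]
  · have hlt : cnt F j < M := not_le.mp hMt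
    have hkeq : keep M A = keep M B := by
      funext n
      by_cases hni : n = i
      · subst hni; rw [hkBi]; simp [keep, hAi, hcAi, hlt]
      · by_cases hnj : n = j
        · subst hnj; rw [hkAj]; symm; simp [keep, hBj, hcBj, hlt]
        · exact hko n hni hnj
    simp only [G]
    apply le_of_eq
    apply Ea_congr
    intro a
    rw [hkeq]

section updeq
variable {i m j : Fin N} (F : Fin N → Bool)

private lemma ueq1 (him : i ≠ m) (hij : i ≠ j) (hmj : m ≠ j) (hFm : F m = true) :
    Function.update (Function.update (Function.update F j true) i false) m true
      = Function.update (Function.update F i false) j true := by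
  funext n
  simp only [Function.update_apply]
  by_cases hn1 : n = i <;> by_cases hn2 : n = m <;> by_cases hn3 : n = j <;> simp_all

private lemma ueq2 (him : i ≠ m) (hij : i ≠ j) (hmj : m ≠ j) :
    Function.update (Function.update (Function.update F j true) m false) i true
      = Function.update (Function.update (Function.update F i true) m false) j true := by
  funext n
  simp only [Function.update_apply]
  by_cases hn1 : n = i <;> by_cases hn2 : n = m <;> by_cases hn3 : n = j <;> simp_all

private lemma ueq3 (him : i ≠ m) (hij : i ≠ j) (hmj : m ≠ j) (hFm : F m = true) :
    Function.update (Function.update (Function.update F i true) j false) m true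
      = Function.update (Function.update F j false) i true := by
  funext n
  simp only [Function.update_apply]
  by_cases hn1 : n = i <;> by_cases hn2 : n = m <;> by_cases hn3 : n = j <;> simp_all

private lemma ueq4 (him : i ≠ m) (hij : i ≠ j) (hmj : m ≠ j) (hFm : ¬ F m = true) :
    Function.update (Function.update (Function.update F i false) m false) j true
      = Function.update (Function.update F i false) j true := by
  funext n
  simp only [Function.update_apply]
  by_cases hn1 : n = i <;> by_cases hn2 : n = m <;> by_cases hn3 : n = j <;> simp_all

private lemma ueq5 (him : i ≠ m) (hij : i ≠ j) (hmj : m ≠ j) :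
    Function.update (Function.update (Function.update F i false) j false) m true
      = Function.update (Function.update (Function.update F j false) i false) m true := by
  funext n
  simp only [Function.update_apply]
  by_cases hn1 : n = i <;> by_cases hn2 : n = m <;> by_cases hn3 : n = j <;> simp_all

private lemma ueq6 (him : i ≠ m) (hij : i ≠ j) (hmj : m ≠ j) (hFm : ¬ F m = true) :
    Function.update (Function.update (Function.update F j false) m false) i true
      = Function.update (Function.update F j false) i true := by
  funext n
  simp only [Function.update_apply]
  by_cases hn1 : n = i <;> by_cases hn2 : n = m <;> by_cases hn3 : n = j <;> simp_all

end updeq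

lemma S2G (h0 : ∀ n, 0 ≤ lam n) (h1 : ∀ n, lam n ≤ 1)
    (hmono : ∀ i j : Fin N, i ≤ j → lam i ≤ lam j) :
    ∀ (h : ℕ) (F : Fin N → Bool) (i j : Fin N), i < j →
    G M lam h (Function.update (Function.update F i false) j true)
      ≤ G M lam h (Function.update (Function.update F j false) i true) := by
  intro h
  induction h with
  | zero =>
    intro F i j hij
    have hne : i ≠ j := ne_of_lt hij
    have l1 := pc_update (Function.update F i false) j true
    have l2 := pc_update F i false
    have l3 := pc_update (Function.update F j false) i true
    have l4 := pc_update F j false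
    rw [Function.update_of_ne (Ne.symm hne)] at l1
    rw [Function.update_of_ne hne] at l3
    have e : packetCount (Function.update (Function.update F i false) j true)
        = packetCount (Function.update (Function.update F j false) i true) := by
      by_cases hFi : F i = true <;> by_cases hFj : F j = true <;>
        simp [hFi, hFj] at l1 l2 l3 l4 <;> omega
    simp only [G, fM]
    rw [e]
  | succ h IH =>
    have main : ∀ (d : ℕ) (F : Fin N → Bool) (i j : Fin N), i < j → (j:ℕ) - (i:ℕ) ≤ d →
        G M lam (h+1) (Function.update (Function.update F i false) j true)
          ≤ G M lam (h+1) (Function.update (Function.update F j false) i true) := by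
      intro d
      induction d with
      | zero =>
        intro F i j hij hd
        exact absurd hd (by have := (Fin.lt_def).1 hij; omega)
      | succ d IHd =>
        intro F i j hij hd
        have hijv : (i:ℕ) < (j:ℕ) := (Fin.lt_def).1 hij
        by_cases hadj : (j:ℕ) = (i:ℕ) + 1
        · exact adj_step M h0 h1 hmono h IH F i j hij hadj
        · have hmlt : (i:ℕ) + 1 < N := by have := j.isLt; omega
          obtain ⟨m, hmval⟩ : ∃ m : Fin N, (m:ℕ) = (i:ℕ)+1 := ⟨⟨(i:ℕ)+1, hmlt⟩, rfl⟩
          have him : i < m := (Fin.lt_def).2 (by omega)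
          have hmj : m < j := (Fin.lt_def).2 (by omega)
          have hne_im : i ≠ m := ne_of_lt him
          have hne_mj : m ≠ j := ne_of_lt hmj
          have hne_ij : i ≠ j := ne_of_lt hij
          have hd1 : (m:ℕ) - (i:ℕ) ≤ d := by omega
          have hd2 : (j:ℕ) - (m:ℕ) ≤ d := by omega
          by_cases hFm : F m = true
          · have s2 := IHd (Function.update F j true) i m him hd1
            have s1 := IHd (Function.update F i true) m j hmj hd2
            have e1 : Function.update (Function.update (Function.update F j true) i false) m true
                = Function.update (Function.update F i false) j true := ueq1 F hne_im hne_ij hne_mj hFm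
            have e2 : Function.update (Function.update (Function.update F j true) m false) i true
                = Function.update (Function.update (Function.update F i true) m false) j true := ueq2 F hne_im hne_ij hne_mj
            have e3 : Function.update (Function.update (Function.update F i true) j false) m true
                = Function.update (Function.update F j false) i true := ueq3 F hne_im hne_ij hne_mj hFm
            rw [e1, e2] at s2
            rw [e3] at s1
            exact le_trans s2 s1
          · have s2 := IHd (Function.update F i false) m j hmj hd2
            have s1 := IHd (Function.update F j false) i m him hd1
            have e1 : Function.update (Function.update (Function.update F i false) m false) j true
                = Function.update (Function.update F i false) j true := ueq4 F hne_im hne_ij hne_mj hFm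
            have e2 : Function.update (Function.update (Function.update F i false) j false) m true
                = Function.update (Function.update (Function.update F j false) i false) m true := ueq5 F hne_im hne_ij hne_mj
            have e3 : Function.update (Function.update (Function.update F j false) m false) i true
                = Function.update (Function.update F j false) i true := ueq6 F hne_im hne_ij hne_mj hFm
            rw [e1, e2] at s2
            rw [e3] at s1
            exact le_trans s2 s1
    intro F i j hij
    exact main ((j:ℕ) - (i:ℕ)) F i j hij le_rfl

end DP
section OneStep

variable (M : ℕ)

lemma pc_eq_card (F : Fin N → Bool) :
    packetCount F = (Finset.univ.filter (fun n => F n = true)).card := by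
  rw [Finset.card_filter]
  rfl

lemma pc_split (F : Fin N → Bool) (y : Fin N) (hy : F y = true) :
    packetCount F
      = (Finset.univ.filter (fun m => m < y ∧ F m = true)).card + 1 + cnt F y := by
  rw [pc_eq_card, Finset.card_filter, Finset.card_filter, cnt, Finset.card_filter]
  have key : ∀ n : Fin N, (if F n = true then (1:ℕ) else 0)
      = ((if (n < y ∧ F n = true) then 1 else 0) + (if n = y then 1 else 0))
        + (if (y < n ∧ F n = true) then 1 else 0) := by
    intro n
    rcases lt_trichotomy n y with h | h | h
    · have h1 : n ≠ y := ne_of_lt h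
      have h2 : ¬ y < n := not_lt.mpr (le_of_lt h)
      by_cases hF : F n = true <;> simp [hF, h, h1, h2]
    · subst h
      simp [hy, lt_irrefl]
    · have h1 : n ≠ y := ne_of_gt h
      have h2 : ¬ n < y := not_lt.mpr (le_of_lt h)
      by_cases hF : F n = true <;> simp [hF, h, h1, h2]
  calc (∑ n, if F n = true then (1:ℕ) else 0)
      = ∑ n, (((if (n < y ∧ F n = true) then (1:ℕ) else 0) + (if n = y then 1 else 0))
          + (if (y < n ∧ F n = true) then 1 else 0)) := Finset.sum_congr rfl (fun n _ => key n)
    _ = ((∑ n, if (n < y ∧ F n = true) then (1:ℕ) else 0) + ∑ n : Fin N, (if n = y then (1:ℕ) else 0))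
          + (∑ n, if (y < n ∧ F n = true) then (1:ℕ) else 0) := by
        rw [Finset.sum_add_distrib, Finset.sum_add_distrib]
    _ = ((∑ n, if (n < y ∧ F n = true) then (1:ℕ) else 0) + 1)
          + (∑ n, if (y < n ∧ F n = true) then (1:ℕ) else 0) := by
        congr 2
        rw [Finset.sum_ite_eq' Finset.univ y (fun _ => (1:ℕ))]
        simp

lemma onestep (h0 : ∀ n, 0 ≤ lam n) (h1 : ∀ n, lam n ≤ 1)
    (hmono : ∀ i j : Fin N, i ≤ j → lam i ≤ lam j)
    (H : (Fin N → Bool) → ℝ)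
    (hS1 : ∀ F F' : Fin N → Bool, (∀ n, F n = true → F' n = true) → H F ≤ H F')
    (hS2 : ∀ (F : Fin N → Bool) (i j : Fin N), i < j →
      H (Function.update (Function.update F i false) j true)
        ≤ H (Function.update (Function.update F j false) i true))
    (F : Fin N → Bool) :
    ∀ (K' : Fin N → Bool), (∀ n, K' n = true → F n = true) →
      packetCount K' + min M (packetCount F) = packetCount F →
      Ea lam (fun a => H (fun n => K' n || a n))
        ≤ Ea lam (fun a => H (fun n => keep M F n || a n)) := by
  suffices hmain : ∀ (S : ℕ) (K' : Fin N → Bool), sumIdx K' = S →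
      (∀ n, K' n = true → F n = true) →
      packetCount K' + min M (packetCount F) = packetCount F →
      Ea lam (fun a => H (fun n => K' n || a n))
        ≤ Ea lam (fun a => H (fun n => keep M F n || a n)) by
    intro K' hsub hc
    exact hmain (sumIdx K') K' rfl hsub hc
  intro S
  induction S using Nat.strong_induction_on with
  | _ S IH =>
    intro K' hSval hsub hc
    by_cases hdom : ∀ n, K' n = true → keep M F n = true
    · apply Ea_mono h0 h1
      intro a
      apply hS1
      intro n
      simp only [Bool.or_eq_true]
      rintro (hk | ha)
      · exact Or.inl (hdom n hk)
      · exact Or.inr ha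
    · push_neg at hdom
      obtain ⟨y, hy, hky⟩ := hdom
      have hFy : F y = true := hsub y hy
      have hcy : cnt F y < M := by
        by_contra hcon
        apply hky
        simp only [keep, hFy, Bool.true_and, Bool.not_eq_true', decide_eq_false_iff_not]
        exact hcon
      have hx : ∃ x, x < y ∧ F x = true ∧ K' x = false := by
        by_contra hno
        push_neg at hno
        have hno' : ∀ x, x < y → F x = true → K' x = true := by
          intro x h1' h2'
          simpa using hno x h1' h2'
        have hcard : (Finset.univ.filter (fun m => m < y ∧ F m = true)).card + 1
            ≤ packetCount K' := by
          rw [pc_eq_card]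
          have hins : insert y (Finset.univ.filter (fun m => m < y ∧ F m = true))
              ⊆ Finset.univ.filter (fun m => K' m = true) := by
            intro m hm
            rcases Finset.mem_insert.mp hm with h | h
            · subst h; simp [hy]
            · simp only [Finset.mem_filter, Finset.mem_univ, true_and] at h ⊢
              exact hno' m h.1 h.2
          have hnotin : y ∉ Finset.univ.filter (fun m => m < y ∧ F m = true) := by
            simp [lt_irrefl]
          calc (Finset.univ.filter (fun m => m < y ∧ F m = true)).card + 1
              = (insert y (Finset.univ.filter (fun m => m < y ∧ F m = true))).card := by
                rw [Finset.card_insert_of_notMem hnotin]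
            _ ≤ _ := Finset.card_le_card hins
        have hsplit := pc_split F y hFy
        omega
      obtain ⟨x, hxy, hFx, hKx⟩ := hx
      have hxyne : x ≠ y := ne_of_lt hxy
      set C : Fin N → Bool := Function.update K' y false with hCdef
      have hCy : C y = false := by rw [hCdef]; simp
      have hCx : C x = false := by rw [hCdef, Function.update_of_ne hxyne]; exact hKx
      have hK'eq : Function.update C y true = K' := by
        rw [hCdef, Function.update_idem, ← hy, Function.update_eq_self]
      set K'' : Fin N → Bool := Function.update C x true with hK''def
      have step : Ea lam (fun a => H (fun n => K' n || a n))
          ≤ Ea lam (fun a => H (fun n => K'' n || a n)) := by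
        have hkl := KL h0 h1 hmono H hS1 hS2 x y hxy C hCx hCy
        rw [hK'eq] at hkl
        exact hkl
      have l1 := sumIdx_update K' y false
      have l2 := sumIdx_update C x true
      rw [hy, ← hCdef] at l1
      rw [hCx, ← hK''def] at l2
      simp at l1 l2
      have hxv : (x:ℕ) < (y:ℕ) := (Fin.lt_def).1 hxy
      have hdec : sumIdx K'' < S := by omega
      have m1 := pc_update K' y false
      have m2 := pc_update C x true
      rw [hy, ← hCdef] at m1
      rw [hCx, ← hK''def] at m2
      simp at m1 m2
      have hc'' : packetCount K'' + min M (packetCount F) = packetCount F := by omega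
      have hsub'' : ∀ n, K'' n = true → F n = true := by
        intro n hn
        by_cases hnx : n = x
        · subst hnx; exact hFx
        · rw [hK''def, Function.update_of_ne hnx] at hn
          by_cases hny : n = y
          · subst hny; rw [hCy] at hn; exact absurd hn (by simp)
          · rw [hCdef, Function.update_of_ne hny] at hn
            exact hsub n hn
      exact le_trans step (IH (sumIdx K'') hdec K'' rfl hsub'' hc'')

end OneStep

section Final

variable (M : ℕ)

lemma pc_decomp (F s : Fin N → Bool) (hs : ∀ n, s n = true → F n = true) :
    packetCount F = packetCount (fun n => F n && !(s n)) + packetCount s := by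
  unfold packetCount
  rw [← Finset.sum_add_distrib]
  apply Finset.sum_congr rfl
  intro n _
  by_cases hsn : s n = true
  · simp [hsn, hs n hsn]
  · have h' : s n = false := Bool.eq_false_iff.mpr hsn
    by_cases hF : F n = true <;> simp [h', hF]

lemma EV_le_G (h0 : ∀ n, 0 ≤ lam n) (h1 : ∀ n, lam n ≤ 1)
    (hmono : ∀ i j : Fin N, i ≤ j → lam i ≤ lam j)
    (pol : List (Fin N → Bool) → (Fin N → Bool)) (hwc : WorkConserving M pol) :
    ∀ (h : ℕ) (L : List (Fin N → Bool)), EV M lam pol h L ≤ G M lam h L.headI := by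
  intro h
  induction h with
  | zero => intro L; simp [EV, G]
  | succ h IH =>
    intro L
    have step1 : EV M lam pol (h+1) L
        ≤ Ea lam (fun a => G M lam h (fun n => (L.headI n && !(pol L n)) || a n)) := by
      simp only [EV]
      apply Ea_mono h0 h1
      intro a
      have := IH (nextState L.headI (pol L) a :: L)
      exact this
    have step2 : Ea lam (fun a => G M lam h (fun n => (L.headI n && !(pol L n)) || a n))
        ≤ Ea lam (fun a => G M lam h (fun n => keep M L.headI n || a n)) := by
      apply onestep M h0 h1 hmono (G M lam h) (S1G M h0 h1 h) (S2G M h0 h1 hmono h)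
        L.headI (fun n => L.headI n && !(pol L n))
      · intro n hn
        simp only [Bool.and_eq_true] at hn
        exact hn.1
      · have hdec := pc_decomp L.headI (pol L) (hwc L).1
        have := (hwc L).2
        omega
    exact le_trans (le_trans step1 step2) (le_of_eq (by simp only [G]))

lemma EV_max_eq_G : ∀ (h : ℕ) (L : List (Fin N → Bool)),
    EV M lam (maxLambdaPol M) h L = G M lam h L.headI := by
  intro h
  induction h with
  | zero => intro L; simp [EV, G]
  | succ h IH =>
    intro L
    simp only [EV, G]
    apply Ea_congr
    intro a
    rw [IH]
    have hns : nextState L.headI (maxLambdaPol M L) a = fun n => keep M L.headI n || a n := by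
      funext n
      simp only [nextState, maxLambdaPol, keep, cnt]
      cases hF : L.headI n <;> simp [hF] <;> congr
    show G M lam h (nextState L.headI (maxLambdaPol M L) a) = _
    rw [hns]

end Final
section Evolve

variable (M : ℕ) (pol : List (Fin N → Bool) → (Fin N → Bool))

def evolve (L : List (Fin N → Bool)) (a : ℕ → Fin N → Bool) : ℕ → List (Fin N → Bool)
  | 0 => L
  | t+1 => nextState (evolve L a t).headI (pol (evolve L a t)) (a t) :: evolve L a t

lemma histories_eq (F0 : Fin N → Bool) (a : ℕ → Fin N → Bool) :
    ∀ t, histories F0 pol a t = evolve pol ([F0]) a t := by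
  intro t
  induction t with
  | zero => rfl
  | succ t IH => simp only [histories, evolve, IH]

lemma evolve_congr (L : List (Fin N → Bool)) :
    ∀ (t : ℕ) (a b : ℕ → Fin N → Bool), (∀ s, s < t → a s = b s) →
      evolve pol L a t = evolve pol L b t := by
  intro t
  induction t with
  | zero => intros; rfl
  | succ t IH =>
    intro a b hab
    have h := IH a b (fun s hs => hab s (Nat.lt_succ_of_lt hs))
    show nextState (evolve pol L a t).headI (pol (evolve pol L a t)) (a t)
        :: evolve pol L a t = nextState (evolve pol L b t).headI (pol (evolve pol L b t)) (b t)
        :: evolve pol L b t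
    rw [h, hab t (Nat.lt_succ_self t)]

lemma evolve_shift (L : List (Fin N → Bool)) (a : ℕ → Fin N → Bool) :
    ∀ t, evolve pol (nextState L.headI (pol L) (a 0) :: L) (fun s => a (s+1)) t
      = evolve pol L a (t+1) := by
  intro t
  induction t with
  | zero => rfl
  | succ t IH =>
    show nextState (evolve pol (nextState L.headI (pol L) (a 0) :: L) (fun s => a (s+1)) t).headI
        (pol (evolve pol (nextState L.headI (pol L) (a 0) :: L) (fun s => a (s+1)) t))
        ((fun s => a (s+1)) t) :: evolve pol (nextState L.headI (pol L) (a 0) :: L)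
          (fun s => a (s+1)) t = _
    rw [IH]
    rfl

def padArr (t : ℕ) (v : Fin t → (Fin N → Bool)) : ℕ → (Fin N → Bool) :=
  fun s => if h : s < t then v ⟨s, h⟩ else fun _ => false

lemma EV_eq_sum : ∀ (t : ℕ) (L : List (Fin N → Bool)),
    EV M lam pol t L = ∑ v : Fin t → (Fin N → Bool),
      (∏ s, wt lam (v s)) * fM M ((evolve pol L (padArr t v) t).headI) := by
  intro t
  induction t with
  | zero =>
    intro L
    have hv : ∀ v : Fin 0 → (Fin N → Bool),
        (∏ s, wt lam (v s)) * fM M ((evolve pol L (padArr 0 v) 0).headI) = fM M L.headI := by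
      intro v
      show (∏ s : Fin 0, wt lam (v s)) * fM M L.headI = fM M L.headI
      simp
    rw [Finset.sum_congr rfl (fun v _ => hv v), Finset.sum_const]
    have hcard : (Finset.univ : Finset (Fin 0 → (Fin N → Bool))).card = 1 := by
      rw [Finset.card_univ]
      simp [Fintype.card_fun]
    rw [hcard]
    simp [EV]
  | succ t IH =>
    intro L
    have lhs : EV M lam pol (t+1) L
        = Ea lam (fun a0 => ∑ v : Fin t → (Fin N → Bool),
            (∏ s, wt lam (v s))
              * fM M ((evolve pol (nextState L.headI (pol L) a0 :: L) (padArr t v) t).headI)) := by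
      show Ea lam (fun a0 => EV M lam pol t (nextState L.headI (pol L) a0 :: L)) = _
      exact Ea_congr (fun a0 => IH _)
    rw [lhs]
    rw [← Equiv.sum_comp (Fin.consEquiv (fun _ : Fin (t+1) => Fin N → Bool))
      (fun v => (∏ s, wt lam (v s)) * fM M ((evolve pol L (padArr (t+1) v) (t+1)).headI))]
    rw [Fintype.sum_prod_type]
    unfold Ea
    apply Finset.sum_congr rfl
    intro a0 _
    rw [Finset.mul_sum]
    apply Finset.sum_congr rfl
    intro v' _
    have hfun : (Fin.consEquiv (fun _ : Fin (t+1) => Fin N → Bool)) (a0, v') = Fin.cons a0 v' := by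
      rfl
    rw [hfun]
    have hprod : (∏ s : Fin (t+1), wt lam ((Fin.cons a0 v' : Fin (t+1) → (Fin N → Bool)) s))
        = wt lam a0 * ∏ s : Fin t, wt lam (v' s) := by
      rw [Fin.prod_univ_succ]
      simp
    have hev : evolve pol L (padArr (t+1) (Fin.cons a0 v')) (t+1)
        = evolve pol (nextState L.headI (pol L) a0 :: L) (padArr t v') t := by
      rw [← evolve_shift]
      have h0 : padArr (t+1) (Fin.cons a0 v') 0 = a0 := by
        show (if h : 0 < t+1 then (Fin.cons a0 v' : Fin (t+1) → (Fin N → Bool)) ⟨0, h⟩ else fun _ => false) = a0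
        rw [dif_pos (Nat.succ_pos t)]
        exact Fin.cons_zero (α := fun _ : Fin (t+1) => Fin N → Bool) a0 v'
      rw [h0]
      apply evolve_congr
      intro s hs
      show padArr (t+1) (Fin.cons a0 v') (s+1) = padArr t v' s
      have h1 : s + 1 < t + 1 := Nat.succ_lt_succ hs
      show (if h : s+1 < t+1 then (Fin.cons a0 v' : Fin (t+1) → (Fin N → Bool)) ⟨s+1, h⟩ else fun _ => false)
        = (if h : s < t then v' ⟨s, h⟩ else fun _ => false)
      rw [dif_pos h1, dif_pos hs]
      have : (⟨s+1, h1⟩ : Fin (t+1)) = Fin.succ ⟨s, hs⟩ := by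
        rw [Fin.succ_mk]
      rw [this, Fin.cons_succ]
    rw [hprod, hev]
    ring

end Evolve
section Measure

variable (M : ℕ) {Ω : Type*} [MeasureSpace Ω]

lemma prob_A (A : ℕ → Ω → Fin N → Bool)
    (hprob : IsProbabilityMeasure (volume : Measure Ω))
    (hAmeas : ∀ t n, Measurable (fun ω => A t ω n))
    (hAdist : ∀ t n, volume {ω | A t ω n = true} = ENNReal.ofReal (lam n))
    (h0 : ∀ n, 0 ≤ lam n) (h1 : ∀ n, lam n ≤ 1)
    (s : ℕ) (n : Fin N) (b : Bool) :
    volume {ω | A s ω n = b} = ENNReal.ofReal (if b then lam n else 1 - lam n) := by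
  haveI := hprob
  cases b with
  | true => simpa using hAdist s n
  | false =>
    have hset : {ω | A s ω n = false} = {ω | A s ω n = true}ᶜ := by
      ext ω
      simp
    have hms : MeasurableSet {ω | A s ω n = true} := by
      have := (hAmeas s n) (measurableSet_singleton true)
      simpa [Set.preimage] using this
    rw [hset, measure_compl hms (measure_ne_top _ _), hAdist s n, measure_univ,
      ← ENNReal.ofReal_one, ← ENNReal.ofReal_sub 1 (h0 n)]
    simp

lemma integral_eq_sum (pol : List (Fin N → Bool) → (Fin N → Bool))
    (A : ℕ → Ω → Fin N → Bool)
    (hprob : IsProbabilityMeasure (volume : Measure Ω))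
    (hAmeas : ∀ t n, Measurable (fun ω => A t ω n))
    (hAdist : ∀ t n, volume {ω | A t ω n = true} = ENNReal.ofReal (lam n))
    (hAindep : iIndepFun
      (fun (p : ℕ × Fin N) ω => A p.1 ω p.2) volume)
    (h0 : ∀ n, 0 ≤ lam n) (h1 : ∀ n, lam n ≤ 1)
    (F0 : Fin N → Bool) (t : ℕ) :
    ∫ ω, fM M ((evolve pol ([F0]) (fun s => A s ω) t).headI)
      = ∑ v : Fin t → (Fin N → Bool),
          (∏ s, wt lam (v s)) * fM M ((evolve pol ([F0]) (padArr t v) t).headI) := by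
  haveI := hprob
  set φ : (Fin t → (Fin N → Bool)) → ℝ :=
    fun v => fM M ((evolve pol ([F0]) (padArr t v) t).headI) with hφ
  set Sv : (Fin t → (Fin N → Bool)) → Set Ω :=
    fun v => {ω | ∀ (s : Fin t) (n : Fin N), A s ω n = v s n} with hSv
  have hSmeas : ∀ v, MeasurableSet (Sv v) := by
    intro v
    have hrw : Sv v = ⋂ (s : Fin t), ⋂ (n : Fin N), {ω | A s ω n = v s n} := by
      ext ω
      simp [hSv, Set.mem_iInter]
    rw [hrw]
    refine MeasurableSet.iInter fun s => MeasurableSet.iInter fun n => ?_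
    have := (hAmeas s n) (measurableSet_singleton (v s n))
    simpa [Set.preimage] using this
  have hpoint : ∀ ω, fM M ((evolve pol ([F0]) (fun s => A s ω) t).headI)
      = ∑ v : Fin t → (Fin N → Bool), Set.indicator (Sv v) (fun _ => φ v) ω := by
    intro ω
    set v0 : Fin t → (Fin N → Bool) := fun s n => A s ω n with hv0
    have hmem : ω ∈ Sv v0 := by
      simp [hSv, hv0]
    rw [Finset.sum_eq_single v0]
    · rw [Set.indicator_of_mem hmem]
      show fM M ((evolve pol ([F0]) (fun s => A s ω) t).headI) = φ v0
      rw [hφ]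
      have : evolve pol ([F0]) (fun s => A s ω) t = evolve pol ([F0]) (padArr t v0) t := by
        apply evolve_congr
        intro s hs
        funext n
        show A s ω n = padArr t v0 s n
        simp [padArr, hs, hv0]
      rw [this]
    · intro v _ hv
      apply Set.indicator_of_notMem
      intro hmem'
      apply hv
      funext s n
      have hh : A (s : ℕ) ω n = v s n := hmem' s n
      rw [hv0]
      exact hh.symm
    · intro h
      exact absurd (Finset.mem_univ v0) h
  rw [show (fun ω => fM M ((evolve pol ([F0]) (fun s => A s ω) t).headI))
      = (fun ω => ∑ v : Fin t → (Fin N → Bool), Set.indicator (Sv v) (fun _ => φ v) ω)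
    from funext hpoint]
  rw [integral_finset_sum Finset.univ
    (fun v _ => (integrable_const (φ v)).indicator (hSmeas v))]
  have hind : ∀ v : Fin t → (Fin N → Bool),
      ∫ ω, Set.indicator (Sv v) (fun _ => φ v) ω = (volume (Sv v)).toReal • φ v :=
    fun v => integral_indicator_const (φ v) (hSmeas v)
  rw [Finset.sum_congr rfl (fun v _ => hind v)]
  have hprodmeas : ∀ v : Fin t → (Fin N → Bool),
      volume (Sv v) = ∏ s : Fin t, ∏ n : Fin N,
        ENNReal.ofReal (if v s n then lam n else 1 - lam n) := by
    intro v
    set vv : ℕ × Fin N → Bool :=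
      fun p => if h : p.1 < t then v ⟨p.1, h⟩ p.2 else true with hvv
    set T : Finset (ℕ × Fin N) := (Finset.range t) ×ˢ (Finset.univ : Finset (Fin N)) with hT
    have hmeas' : ∀ p : ℕ × Fin N, p ∈ T →
        MeasurableSet ({vv p} : Set Bool) := fun p _ => measurableSet_singleton _
    have key := (iIndepFun_iff_measure_inter_preimage_eq_mul.mp hAindep) T
      (sets := fun p => ({vv p} : Set Bool)) hmeas'
    have hSveq : Sv v = ⋂ p ∈ T, (fun ω => A p.1 ω p.2) ⁻¹' ({vv p} : Set Bool) := by
      ext ω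
      simp only [hSv, Set.mem_setOf_eq, Set.mem_iInter, Set.mem_preimage,
        Set.mem_singleton_iff, hT, Finset.mem_product, Finset.mem_range, Finset.mem_univ,
        and_true]
      constructor
      · intro h p hp
        rw [hvv]
        simp only [dif_pos hp]
        exact h ⟨p.1, hp⟩ p.2
      · intro h s n
        have := h ((s : ℕ), n) s.isLt
        rw [hvv] at this
        simp only [dif_pos s.isLt] at this
        simpa using this
    rw [hSveq, key]
    rw [hT, Finset.prod_product]
    rw [← Fin.prod_univ_eq_prod_range (fun s' => ∏ n : Fin N,
      volume ((fun ω => A s' ω n) ⁻¹' ({vv (s', n)} : Set Bool))) t]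
    apply Finset.prod_congr rfl
    intro s _
    apply Finset.prod_congr rfl
    intro n _
    have hpre : ((fun ω => A (s : ℕ) ω n) ⁻¹' ({vv ((s : ℕ), n)} : Set Bool))
        = {ω | A (s : ℕ) ω n = vv ((s : ℕ), n)} := by
      ext ω
      simp
    rw [hpre, prob_A A hprob hAmeas hAdist h0 h1 (s : ℕ) n (vv ((s : ℕ), n))]
    congr 1
    rw [hvv]
    simp only [dif_pos s.isLt]
  apply Finset.sum_congr rfl
  intro v _
  rw [hprodmeas v, smul_eq_mul]
  congr 1
  rw [ENNReal.toReal_prod]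
  unfold wt
  apply Finset.prod_congr rfl
  intro s _
  rw [ENNReal.toReal_prod]
  apply Finset.prod_congr rfl
  intro n _
  have hnn : (0:ℝ) ≤ (if v s n = true then lam n else 1 - lam n) := by
    cases hvb : v s n
    · rw [if_neg (by simp : ¬(false = true))]
      linarith [h1 n]
    · rw [if_pos rfl]
      exact h0 n
  rw [ENNReal.toReal_ofReal hnn]

end Measure
end S15

/-- Corollary 1: for every work-conserving policy `π` and every slot `t`,
the expected number of packets transmitted, `E[min(M, U(t))]`, is no larger under `π`
than under the Max-λ policy; hence Max-λ maximizes throughput among work-conserving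
policies. -/
theorem stmt15 {N M : ℕ} (hMN : M < N) (hM : 0 < M)
    (lam : Fin N → ℝ) (hlam_mono : Monotone lam)
    (hlam : ∀ n, 0 < lam n ∧ lam n < 1)
    {Ω : Type*} [MeasureSpace Ω] (hprob : IsProbabilityMeasure (volume : Measure Ω))
    (A : ℕ → Ω → Fin N → Bool)
    (hAmeas : ∀ t n, Measurable (fun ω => A t ω n))
    (hAdist : ∀ t n, volume {ω | A t ω n = true} = ENNReal.ofReal (lam n))
    (hAindep : iIndepFun
      (fun (p : ℕ × Fin N) ω => A p.1 ω p.2) volume)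
    (F0 : Fin N → Bool)
    (pol : List (Fin N → Bool) → (Fin N → Bool))
    (hwc : WorkConserving M pol)
    (t : ℕ) :
    ∫ ω, min (M : ℝ) (packetCount (stateAt F0 pol (fun s => A s ω) t) : ℝ) ≤
    ∫ ω, min (M : ℝ) (packetCount (stateAt F0 (maxLambdaPol M) (fun s => A s ω) t) : ℝ) := by
  haveI := hprob
  have h0 : ∀ n, 0 ≤ lam n := fun n => le_of_lt (hlam n).1
  have h1 : ∀ n, lam n ≤ 1 := fun n => le_of_lt (hlam n).2
  have hmono : ∀ i j : Fin N, i ≤ j → lam i ≤ lam j := fun i j hij => hlam_mono hij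
  have key : ∀ (pol' : List (Fin N → Bool) → (Fin N → Bool)),
      ∫ ω, min (M : ℝ) (packetCount (stateAt F0 pol' (fun s => A s ω) t) : ℝ)
        = S15.EV M lam pol' t ([F0]) := by
    intro pol'
    have e1 : (fun ω => min (M : ℝ) (packetCount (stateAt F0 pol' (fun s => A s ω) t) : ℝ))
        = fun ω => S15.fM M ((S15.evolve pol' ([F0]) (fun s => A s ω) t).headI) := by
      funext ω
      show min (M : ℝ)
          (packetCount ((histories F0 pol' (fun s => A s ω) t).headI) : ℝ) = _
      rw [S15.histories_eq pol' F0 (fun s => A s ω) t]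
      rfl
    rw [e1]
    rw [S15.integral_eq_sum M pol' A hprob hAmeas hAdist hAindep h0 h1 F0 t]
    rw [← S15.EV_eq_sum M pol' t ([F0])]
  rw [key pol, key (maxLambdaPol M)]
  have hle := S15.EV_le_G M h0 h1 hmono pol hwc t ([F0])
  have heq := S15.EV_max_eq_G (lam := lam) M t ([F0])
  rw [heq]
  exact hle
end

section
/- (Appendix A) Consider the Markov chain on {0,1}² describing two single-buffer queues served by one server with strict priority to queue 1: from state (1,1) the next state is (A_1, 1), and from each of the states (0,0), (1,0), (0,1) the next state is (A_1, A_2), where A_1, A_2 are independent Bernoulli(λ_1) and Bernoulli(λ_2) random variables drawn fresh each slot. For 0 < λ_1, λ_2 < 1 this chain has a unique stationary distribution, the stationary probability of state (1,1) is q = λ_1 λ_2 / (1 − λ_1 + λ_1 λ_2), and the stationary throughput (the stationary probability of a nonempty state) equals θ(λ_1, λ_2) = 1 − (1 − q)(1 − λ_1)(1 − λ_2). In particular θ(1/2, 1/4) = 7/10 and θ(1/4, 1/2) = 19/28, so θ(1/2, 1/4) > θ(1/4, 1/2): giving priority to the higher-rate queue (Max-λ) yields strictly higher throughput than giving priority to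 the lower-rate queue (Min-λ). -/
open Finset

/-- Transition probabilities of the two single-buffer-queue chain with one server and
strict priority to queue 1: from state `(1,1)` the next state is `(A₁, 1)`; from the
states `(0,0)`, `(1,0)`, `(0,1)` the next state is `(A₁, A₂)`, where `A₁ ~ Bern(l1)`
and `A₂ ~ Bern(l2)` are independent and drawn fresh each slot. -/
def prioTrans (l1 l2 : ℝ) : Bool × Bool → Bool × Bool → ℝ :=
  fun s s' =>
    if s = (true, true) then
      (if s'.2 = true then (if s'.1 then l1 else 1 - l1) else 0)
    else
      (if s'.1 then l1 else 1 - l1) * (if s'.2 then l2 else 1 - l2)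

/-- `ν` is a stationary distribution of the priority chain. -/
def IsStationaryPrio (l1 l2 : ℝ) (ν : Bool × Bool → ℝ) : Prop :=
  (∀ s, 0 ≤ ν s) ∧ (∑ s : Bool × Bool, ν s) = 1 ∧
    ∀ s' : Bool × Bool, ν s' = ∑ s : Bool × Bool, ν s * prioTrans l1 l2 s s'

/-- The closed-form stationary throughput `θ(λ₁, λ₂) = 1 − (1−q)(1−λ₁)(1−λ₂)` with
`q = λ₁λ₂ / (1 − λ₁ + λ₁λ₂)`. -/
noncomputable def prioThroughput (l1 l2 : ℝ) : ℝ :=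
  1 - (1 - l1 * l2 / (1 - l1 + l1 * l2)) * (1 - l1) * (1 - l2)

noncomputable def nu0 (l1 l2 : ℝ) : Bool × Bool → ℝ := fun s =>
  match s with
  | (true, true) => l1 * l2 / (1 - l1 + l1 * l2)
  | (true, false) => (1 - l1 * l2 / (1 - l1 + l1 * l2)) * l1 * (1 - l2)
  | (false, true) => (1 - l1 * l2 / (1 - l1 + l1 * l2)) * (1 - l1) * l2
      + (l1 * l2 / (1 - l1 + l1 * l2)) * (1 - l1)
  | (false, false) => (1 - l1 * l2 / (1 - l1 + l1 * l2)) * (1 - l1) * (1 - l2)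

lemma hDpos (l1 l2 : ℝ) (h1 : 0 < l1) (h1' : l1 < 1) (h2 : 0 < l2) :
    0 < 1 - l1 + l1 * l2 := by nlinarith

lemma unique_lemma (l1 l2 : ℝ) (h1 : 0 < l1) (h1' : l1 < 1) (h2 : 0 < l2) (h2' : l2 < 1)
    (ν : Bool × Bool → ℝ) (hν : IsStationaryPrio l1 l2 ν) : ν = nu0 l1 l2 := by
  obtain ⟨hpos, hsum, heq⟩ := hν
  have hD := hDpos l1 l2 h1 h1' h2
  have hD' : (1 - l1 + l1 * l2) ≠ 0 := ne_of_gt hD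
  have hsum' : ν (true, true) + ν (true, false) + (ν (false, true) + ν (false, false)) = 1 := by
    simpa [Fintype.sum_prod_type] using hsum
  have e1 := heq (true, true)
  have e2 := heq (true, false)
  have e3 := heq (false, true)
  have e4 := heq (false, false)
  simp [Fintype.sum_prod_type, prioTrans] at e1 e2 e3 e4
  have hq : ν (true, true) = l1 * l2 / (1 - l1 + l1 * l2) := by
    field_simp
    nlinarith [e1, hsum']
  funext s
  obtain ⟨a|a, b|b⟩ := s
  · show ν (false, false) = _
    simp only [nu0]; rw [← hq, e4]; nlinarith [hsum']
  · show ν (false, true) = _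
    simp only [nu0]; rw [← hq, e3]; nlinarith [hsum']
  · show ν (true, false) = _
    simp only [nu0]; rw [← hq, e2]; nlinarith [hsum']
  · show ν (true, true) = _
    simp only [nu0]; rw [← hq]

lemma nu0_stationary (l1 l2 : ℝ) (h1 : 0 < l1) (h1' : l1 < 1) (h2 : 0 < l2) (h2' : l2 < 1) :
    IsStationaryPrio l1 l2 (nu0 l1 l2) := by
  have hD := hDpos l1 l2 h1 h1' h2
  have hD' : (1 - l1 + l1 * l2) ≠ 0 := ne_of_gt hD
  have h1q : 1 - l1 * l2 / (1 - l1 + l1 * l2) = (1 - l1) / (1 - l1 + l1 * l2) := by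
    field_simp
    ring
  refine ⟨?_, ?_, ?_⟩
  · have hr : 0 ≤ (1 - l1) / (1 - l1 + l1 * l2) := div_nonneg (by linarith) hD.le
    have hq0 : 0 ≤ l1 * l2 / (1 - l1 + l1 * l2) := div_nonneg (by positivity) hD.le
    intro s
    obtain ⟨a|a, b|b⟩ := s <;> simp only [nu0]
    · rw [h1q]; exact mul_nonneg (mul_nonneg hr (by linarith)) (by linarith)
    · rw [h1q]
      exact add_nonneg (mul_nonneg (mul_nonneg hr (by linarith)) h2.le)
        (mul_nonneg hq0 (by linarith))
    · rw [h1q]; exact mul_nonneg (mul_nonneg hr h1.le) (by linarith)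
    · exact hq0
  · simp only [Fintype.sum_prod_type, Fintype.sum_bool, nu0]
    field_simp
    ring
  · intro s'
    obtain ⟨a|a, b|b⟩ := s' <;>
      simp only [Fintype.sum_prod_type, Fintype.sum_bool, nu0, prioTrans] <;>
      norm_num <;> field_simp <;> ring

/-- Appendix A: the priority chain has a unique stationary distribution;
its probability of state `(1,1)` is `q = λ₁λ₂/(1−λ₁+λ₁λ₂)` and its stationary throughput
(probability of a nonempty state) is `1 − (1−q)(1−λ₁)(1−λ₂)`. In particular
`θ(1/2, 1/4) = 7/10 > 19/28 = θ(1/4, 1/2)`: priority to the higher-rate queue (Max-λ)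
strictly beats priority to the lower-rate queue (Min-λ). -/
theorem stmt17 (l1 l2 : ℝ) (h1 : 0 < l1) (h1' : l1 < 1) (h2 : 0 < l2) (h2' : l2 < 1) :
    (∃! ν : Bool × Bool → ℝ, IsStationaryPrio l1 l2 ν) ∧
    (∀ ν : Bool × Bool → ℝ, IsStationaryPrio l1 l2 ν →
      ν (true, true) = l1 * l2 / (1 - l1 + l1 * l2) ∧
      1 - ν (false, false) = prioThroughput l1 l2) ∧
    prioThroughput (1/2) (1/4) = 7/10 ∧
    prioThroughput (1/4) (1/2) = 19/28 ∧
    prioThroughput (1/4) (1/2) < prioThroughput (1/2) (1/4) := by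
  refine ⟨⟨nu0 l1 l2, nu0_stationary l1 l2 h1 h1' h2 h2',
      fun ν hν => unique_lemma l1 l2 h1 h1' h2 h2' ν hν⟩, ?_, ?_, ?_, ?_⟩
  · intro ν hν
    rw [unique_lemma l1 l2 h1 h1' h2 h2' ν hν]
    exact ⟨rfl, by simp only [nu0, prioThroughput]; try ring⟩
  · norm_num [prioThroughput]
  · norm_num [prioThroughput]
  · norm_num [prioThroughput]
end
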